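/- arXiv:1604.08837 — 5 statements merged into one kernel-verified Lean document; each statement's English description precedes it below -/
import Mathlib

section
/- Let k ≥ 2, ε ∈ {0,1}, and n = 2^k + ε. Then a self-conjugate partition λ of n is chiral if and only if v₂(f_λ) = 1. -/
namespace ChiralPaper

/-- The set of cells of the Young diagram of a partition `p` of `n`:
the 0-indexed cell `(i, j)` (row `i`, column `j`) belongs to the diagram iff
`i` is less than the number of parts of `p` that are at least `j + 1`. -/
def cells {n : ℕ} (p : Nat.Partition n) : Finset (ℕ × ℕ) :=
  (Finset.range n ×ˢ Finset.range n).filter fun c =>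
    c.1 < (p.parts.filter fun a => c.2 + 1 ≤ a).card

/-- `T` is a standard Young tableau of shape `p` (encoded as a function on `ℕ × ℕ`,
vanishing off the diagram): it maps the cells bijectively to `{1, …, n}` and is
strictly increasing along rows and down columns. -/
def IsSYT {n : ℕ} (p : Nat.Partition n) (T : ℕ × ℕ → ℕ) : Prop :=
  Set.BijOn T ↑(cells p) (Set.Icc 1 n) ∧
  (∀ x, x ∉ cells p → T x = 0) ∧
  ∀ c ∈ cells p, ∀ d ∈ cells p, c.1 ≤ d.1 → c.2 ≤ d.2 → c ≠ d → T c < T d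

/-- `f_λ`: the number of standard Young tableaux of shape `p`. -/
noncomputable def fSYT {n : ℕ} (p : Nat.Partition n) : ℕ :=
  Nat.card {T : ℕ × ℕ → ℕ // IsSYT p T}

/-- `g_λ`: the number of standard Young tableaux of shape `p` in which the entry `2`
lies in the first column, i.e. in the (0-indexed) cell `(1, 0)`. -/
noncomputable def gSYT {n : ℕ} (p : Nat.Partition n) : ℕ :=
  Nat.card {T : ℕ × ℕ → ℕ // IsSYT p T ∧ T (1, 0) = 2}

/-- A partition is chiral if `g_λ` is odd. -/
def IsChiral {n : ℕ} (p : Nat.Partition n) : Prop := Odd (gSYT p)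

/-- `C(λ) = ∑_{(i,j) ∈ λ} (j - i)`, the sum of contents of the cells. -/
def contentSum {n : ℕ} (p : Nat.Partition n) : ℤ :=
  ∑ c ∈ cells p, ((c.2 : ℤ) - (c.1 : ℤ))

/-- `b(n)`: the number of chiral partitions of `n`. -/
noncomputable def chiralCount (n : ℕ) : ℕ := Nat.card {p : Nat.Partition n // IsChiral p}

/-- `a(n)`: the number of partitions of `n` with `f_λ` odd. -/
noncomputable def oddCount (n : ℕ) : ℕ := Nat.card {p : Nat.Partition n // Odd (fSYT p)}

/-- `b_v(n)`: the number of chiral partitions of `n` with `v₂(f_λ) = v`. -/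
noncomputable def chiralCountV (v n : ℕ) : ℕ :=
  Nat.card {p : Nat.Partition n // IsChiral p ∧ padicValNat 2 (fSYT p) = v}

/-- A partition is self-conjugate iff its Young diagram is symmetric under transposition. -/
def IsSelfConjugate {n : ℕ} (p : Nat.Partition n) : Prop :=
  ∀ i j : ℕ, (i, j) ∈ cells p ↔ (j, i) ∈ cells p

/-- The hook partition `h(a, b) = (a + 1, 1^b)` of `a + b + 1`. -/
def hook (a b : ℕ) : Nat.Partition (a + b + 1) where
  parts := (a + 1) ::ₘ Multiset.replicate b 1
  parts_pos := by
    intro i hi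
    rw [Multiset.mem_cons] at hi
    rcases hi with h | h
    · omega
    · have := Multiset.eq_of_mem_replicate h
      omega
  parts_sum := by
    simp [Multiset.sum_replicate]
    omega

/-- `ν(m)`: the number of ones in the binary expansion of `m`. -/
def nu (m : ℕ) : ℕ := (Nat.digits 2 m).count 1

/-- `bin(m)`: the set of exponents in the binary expansion of `m`. -/
def binSet (m : ℕ) : Finset ℕ := (Finset.range (m + 1)).filter fun k => m.testBit k

/-- The family of parts `f i`, `i ∈ s`, is *neat*: the binary-digit sets of the parts
are pairwise disjoint and their union is the binary-digit set of the total sum. -/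
def Neat {ι : Type*} [DecidableEq ι] (s : Finset ι) (f : ι → ℕ) : Prop :=
  (∀ i ∈ s, ∀ j ∈ s, i ≠ j → Disjoint (binSet (f i)) (binSet (f j))) ∧
  s.biUnion (fun i => binSet (f i)) = binSet (∑ i ∈ s, f i)

/-- `f : ℕ → ℕ` encodes an ordered set partition of `{1, …, n}` of shape `lam`:
`f` vanishes off `{1, …, n}`, takes values in `{1, …, l}` there, and the fiber of
`(i : ℕ) + 1` has cardinality `lam i`.  (The `i`-th block is the fiber of `i + 1`.) -/
def IsOSP (n l : ℕ) (lam : Fin l → ℕ) (f : ℕ → ℕ) : Prop :=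
  (∀ x, x ∉ Finset.Icc 1 n → f x = 0) ∧
  (∀ x ∈ Finset.Icc 1 n, f x ∈ Finset.Icc 1 l) ∧
  ∀ i : Fin l, ((Finset.Icc 1 n).filter fun x => f x = (i : ℕ) + 1).card = lam i

/-- The number of ordered set partitions of shape `lam` moved by the transposition `(1 2)`. -/
noncomputable def movedCount (n l : ℕ) (lam : Fin l → ℕ) : ℕ :=
  Nat.card {f : ℕ → ℕ // IsOSP n l lam f ∧ f ∘ (Equiv.swap 1 2) ≠ f}

/-- The permutation representation `C[X_λ]` is chiral: the transposition `(1 2)` induces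
an odd permutation of `X_λ`, i.e. the number of moved points is `≡ 2 (mod 4)`. -/
def PermChiral (n l : ℕ) (lam : Fin l → ℕ) : Prop := movedCount n l lam % 4 = 2

/-- Chirality of `C[X_λ]` for a partition given as a multiset. -/
def PermChiralP {n : ℕ} (p : Nat.Partition n) : Prop :=
  PermChiral n p.parts.toList.length (fun i => p.parts.toList.get i)

/-- The `k`-th Bell number: the number of set partitions of a `k`-element set. -/
noncomputable def bell (k : ℕ) : ℕ := Nat.card (Finpartition (Finset.univ : Finset (Fin k)))


lemma card_parts_le {n : ℕ} (p : Nat.Partition n) : Multiset.card p.parts ≤ n := by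
  have := Multiset.card_nsmul_le_sum (s := p.parts) (a := 1) (fun x hx => p.parts_pos hx)
  rw [p.parts_sum] at this; simpa using this

lemma mem_cells {n : ℕ} {p : Nat.Partition n} {i j : ℕ} :
    (i, j) ∈ cells p ↔ i < (p.parts.filter fun a => j + 1 ≤ a).card := by
  constructor
  · intro h; exact (Finset.mem_filter.mp h).2
  · intro h
    refine Finset.mem_filter.mpr ⟨Finset.mem_product.mpr ⟨?_, ?_⟩, h⟩
    · exact Finset.mem_range.mpr <| lt_of_lt_of_le h <|
        le_trans (Multiset.card_le_card (Multiset.filter_le _ _)) (card_parts_le p)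
    · have hne : (p.parts.filter fun a => j + 1 ≤ a) ≠ 0 := by
        intro h0; rw [h0] at h; simp at h
      obtain ⟨a, ha⟩ := Multiset.exists_mem_of_ne_zero hne
      rw [Multiset.mem_filter] at ha
      have han : a ≤ n := by
        rw [← p.parts_sum]
        exact Multiset.single_le_sum (fun x _ => Nat.zero_le x) a ha.1
      exact Finset.mem_range.mpr (by omega)

lemma cells_left {n : ℕ} {p : Nat.Partition n} {i j j' : ℕ} (h : (i, j) ∈ cells p)
    (hj : j' ≤ j) : (i, j') ∈ cells p := by
  rw [mem_cells] at h ⊢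
  refine lt_of_lt_of_le h (Multiset.card_le_card ?_)
  exact Multiset.monotone_filter_right _ (fun b hb => by omega)

lemma cells_up {n : ℕ} {p : Nat.Partition n} {i j i' : ℕ} (h : (i, j) ∈ cells p)
    (hi : i' ≤ i) : (i', j) ∈ cells p := by
  rw [mem_cells] at h ⊢; omega

lemma zero_mem_cells {n : ℕ} (p : Nat.Partition n) (hn : 1 ≤ n) : (0, 0) ∈ cells p := by
  rw [mem_cells]
  have : p.parts.filter (fun a => 0 + 1 ≤ a) = p.parts := by
    apply Multiset.filter_eq_self.mpr
    intro a ha; exact p.parts_pos ha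
  rw [this]
  by_contra h
  have : p.parts = 0 := by
    simpa using Nat.le_zero.mp (Nat.le_of_not_lt h)
  have h2 := p.parts_sum; rw [this] at h2; simp at h2; omega

lemma SYT_zero {n : ℕ} {p : Nat.Partition n} {T : ℕ × ℕ → ℕ} (hT : IsSYT p T)
    (hn : 1 ≤ n) : T (0, 0) = 1 := by
  obtain ⟨hbij, hz, hmono⟩ := hT
  have h1 : (1 : ℕ) ∈ Set.Icc 1 n := by simp [hn]
  obtain ⟨d, hd, hTd⟩ := hbij.surjOn h1
  have h00 := zero_mem_cells p hn
  by_cases hde : d = (0, 0)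
  · rw [← hde]; exact hTd
  · exfalso
    have := hmono (0,0) h00 d hd (Nat.zero_le _) (Nat.zero_le _) (fun h => hde h.symm)
    have hmem := hbij.mapsTo (by exact_mod_cast h00)
    simp only [Set.mem_Icc] at hmem
    omega

lemma SYT_two {n : ℕ} {p : Nat.Partition n} {T : ℕ × ℕ → ℕ} (hT : IsSYT p T)
    (hn : 2 ≤ n) (h10 : (1, 0) ∈ cells p) (h01 : (0, 1) ∈ cells p) :
    T (1, 0) = 2 ∨ T (0, 1) = 2 := by
  obtain ⟨hbij, hz, hmono⟩ := hT
  have h00 := zero_mem_cells p (by omega)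
  have hT00 : T (0, 0) = 1 := SYT_zero ⟨hbij, hz, hmono⟩ (by omega)
  have h2 : (2 : ℕ) ∈ Set.Icc 1 n := by simp; omega
  obtain ⟨c, hc, hTc⟩ := hbij.surjOn h2
  have hcmem : c ∈ cells p := hc
  obtain ⟨i, j⟩ := c
  -- value of any cell is ≥ 1
  have hge : ∀ d ∈ cells p, 1 ≤ T d := fun d hd => (hbij.mapsTo (by exact_mod_cast hd)).1
  rcases Nat.eq_zero_or_pos i with hi | hi
  · subst hi
    rcases Nat.lt_or_ge j 2 with hj | hj
    · interval_cases j
      · rw [hT00] at hTc; omega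
      · right; exact hTc
    · exfalso
      have hb : ((0:ℕ), (1:ℕ)) ∈ cells p := h01
      have h1 := hmono (0,0) h00 (0,1) hb (le_refl _) (by omega) (by decide)
      have h2' := hmono (0,1) hb (0,j) hcmem (le_refl _) (by omega) (by simp [Prod.ext_iff]; omega)
      omega
  rcases Nat.eq_zero_or_pos j with hj | hj
  · subst hj
    rcases Nat.lt_or_ge i 2 with hi2 | hi2
    · have : i = 1 := by omega
      subst this; left; exact hTc
    · exfalso
      have h1 := hmono (0,0) h00 (1,0) h10 (by omega) (le_refl _) (by decide)
      have h2' := hmono (1,0) h10 (i,0) hcmem (by omega) (le_refl _) (by simp [Prod.ext_iff]; omega)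
      omega
  · exfalso
    have ha : (i, 0) ∈ cells p := cells_left hcmem (Nat.zero_le _)
    have hb : (0, j) ∈ cells p := cells_up hcmem (Nat.zero_le _)
    have h1 := hmono (i,0) ha (i,j) hcmem (le_refl _) (Nat.zero_le _) (by simp [Prod.ext_iff]; omega)
    have h2' := hmono (0,j) hb (i,j) hcmem (Nat.zero_le _) (le_refl _) (by simp [Prod.ext_iff]; omega)
    have ea : T (i, 0) = 1 := by have := hge _ ha; omega
    have eb : T (0, j) = 1 := by have := hge _ hb; omega
    have : (i, (0:ℕ)) = ((0:ℕ), j) :=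
      hbij.injOn (by exact_mod_cast ha) (by exact_mod_cast hb) (by rw [ea, eb])
    simp at this; omega


lemma filter_one {n : ℕ} (p : Nat.Partition n) :
    (p.parts.filter fun a => 0 + 1 ≤ a) = p.parts :=
  Multiset.filter_eq_self.mpr fun a ha => p.parts_pos ha

lemma corners {n : ℕ} {p : Nat.Partition n} (hp : IsSelfConjugate p) (hn : 2 ≤ n) :
    (1, 0) ∈ cells p ∧ (0, 1) ∈ cells p := by
  have key : (1, 0) ∈ cells p ∨ (0, 1) ∈ cells p := by
    by_cases h : 2 ≤ Multiset.card p.parts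
    · left; rw [mem_cells, filter_one]; omega
    · right
      have hne : p.parts ≠ 0 := by
        intro h0
        have := p.parts_sum; rw [h0] at this; simp at this; omega
      obtain ⟨a, ha⟩ := Multiset.exists_mem_of_ne_zero hne
      have hcard : Multiset.card p.parts = 1 := by
        have : 0 < Multiset.card p.parts := Multiset.card_pos.mpr hne
        omega
      obtain ⟨b, hb⟩ := Multiset.card_eq_one.mp hcard
      have hbn : b = n := by
        have := p.parts_sum; rw [hb] at this; simpa using this
      rw [mem_cells, hb]
      have hb2 : 1 + 1 ≤ b := by omega
      simp [Multiset.filter_singleton, hb2]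
  rcases key with h | h
  · exact ⟨h, (hp 1 0).mp h⟩
  · exact ⟨(hp 0 1).mp h, h⟩

lemma swap_mem_cells {n : ℕ} {p : Nat.Partition n} (hp : IsSelfConjugate p)
    (x : ℕ × ℕ) : x.swap ∈ cells p ↔ x ∈ cells p := by
  obtain ⟨i, j⟩ := x; exact (hp j i)

lemma transpose_SYT {n : ℕ} {p : Nat.Partition n} (hp : IsSelfConjugate p)
    {T : ℕ × ℕ → ℕ} (hT : IsSYT p T) : IsSYT p (T ∘ Prod.swap) := by
  obtain ⟨hbij, hz, hmono⟩ := hT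
  refine ⟨⟨?_, ?_, ?_⟩, ?_, ?_⟩
  · intro x hx
    exact hbij.mapsTo ((swap_mem_cells hp x).mpr (by exact_mod_cast hx))
  · intro x hx y hy h
    have hx' := (swap_mem_cells hp x).mpr (by exact_mod_cast hx)
    have hy' := (swap_mem_cells hp y).mpr (by exact_mod_cast hy)
    have := hbij.injOn (by exact_mod_cast hx') (by exact_mod_cast hy') h
    exact Prod.swap_injective this
  · intro y hy
    obtain ⟨x, hx, hTx⟩ := hbij.surjOn hy
    refine ⟨x.swap, ?_, ?_⟩
    · have hx2 : x ∈ cells p := by exact_mod_cast hx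
      exact_mod_cast (swap_mem_cells hp x).mpr hx2
    · simpa using hTx
  · intro x hx
    exact hz x.swap fun h => hx ((swap_mem_cells hp x).mp h)
  · intro c hc d hd h1 h2 hne
    exact hmono c.swap ((swap_mem_cells hp c).mpr hc) d.swap ((swap_mem_cells hp d).mpr hd)
      (by simpa using h2) (by simpa using h1) (fun h => hne (Prod.swap_injective h))


lemma finite_SYT {n : ℕ} (p : Nat.Partition n) (P : (ℕ × ℕ → ℕ) → Prop)
    (hP : ∀ T, P T → IsSYT p T) : Finite {T // P T} := by
  classical
  let F : {T // P T} → ({c : ℕ × ℕ // c ∈ cells p} → Fin (n + 1)) := fun T c =>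
    ⟨T.1 c, by
      have h := (hP T.1 T.2).1.mapsTo (Finset.mem_coe.mpr c.2)
      simp only [Set.mem_Icc] at h
      omega⟩
  have hinj : Function.Injective F := by
    intro T₁ T₂ h
    apply Subtype.ext
    funext x
    by_cases hx : x ∈ cells p
    · have := congrArg Fin.val (congrFun h ⟨x, hx⟩)
      exact this
    · rw [(hP T₁.1 T₁.2).2.1 x hx, (hP T₂.1 T₂.2).2.1 x hx]
  exact Finite.of_injective F hinj

lemma two_pos_iff {n : ℕ} {p : Nat.Partition n} (hp : IsSelfConjugate p) (hn : 2 ≤ n)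
    {T : ℕ × ℕ → ℕ} (hT : IsSYT p T) : ¬ T (1, 0) = 2 ↔ T (0, 1) = 2 := by
  obtain ⟨h10, h01⟩ := corners hp hn
  constructor
  · intro h
    rcases SYT_two hT hn h10 h01 with h' | h'
    · exact absurd h' h
    · exact h'
  · intro h h'
    have := hT.1.injOn (by exact_mod_cast h10) (by exact_mod_cast h01) (by rw [h, h'])
    simp [Prod.ext_iff] at this

lemma fSYT_eq_two_gSYT {n : ℕ} {p : Nat.Partition n} (hp : IsSelfConjugate p)
    (hn : 2 ≤ n) : fSYT p = 2 * gSYT p := by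
  classical
  have fA : Finite {T : ℕ × ℕ → ℕ // IsSYT p T ∧ T (1, 0) = 2} :=
    finite_SYT p _ fun T h => h.1
  have fB : Finite {T : ℕ × ℕ → ℕ // IsSYT p T ∧ T (0, 1) = 2} :=
    finite_SYT p _ fun T h => h.1
  -- B ≃ A by transposition
  have eBA : {T : ℕ × ℕ → ℕ // IsSYT p T ∧ T (0, 1) = 2} ≃
      {T : ℕ × ℕ → ℕ // IsSYT p T ∧ T (1, 0) = 2} :=
    { toFun := fun T => ⟨T.1 ∘ Prod.swap, transpose_SYT hp T.2.1, by
        simpa using T.2.2⟩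
      invFun := fun T => ⟨T.1 ∘ Prod.swap, transpose_SYT hp T.2.1, by
        simpa using T.2.2⟩
      left_inv := fun T => by
        apply Subtype.ext; funext x; simp
      right_inv := fun T => by
        apply Subtype.ext; funext x; simp }
  -- split full set
  have e1 : {T : ℕ × ℕ → ℕ // IsSYT p T} ≃
      ({x : {T : ℕ × ℕ → ℕ // IsSYT p T} // x.1 (1, 0) = 2} ⊕
       {x : {T : ℕ × ℕ → ℕ // IsSYT p T} // ¬ x.1 (1, 0) = 2}) :=
    (Equiv.sumCompl _).symm
  have e2 : {x : {T : ℕ × ℕ → ℕ // IsSYT p T} // x.1 (1, 0) = 2} ≃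
      {T : ℕ × ℕ → ℕ // IsSYT p T ∧ T (1, 0) = 2} :=
    Equiv.subtypeSubtypeEquivSubtypeInter (IsSYT p) (fun T => T (1, 0) = 2)
  have e3 : {x : {T : ℕ × ℕ → ℕ // IsSYT p T} // ¬ x.1 (1, 0) = 2} ≃
      {T : ℕ × ℕ → ℕ // IsSYT p T ∧ T (0, 1) = 2} :=
    (Equiv.subtypeSubtypeEquivSubtypeInter (IsSYT p) (fun T => ¬ T (1, 0) = 2)).trans
      (Equiv.subtypeEquivRight fun T =>
        ⟨fun ⟨h, h2⟩ => ⟨h, (two_pos_iff hp hn h).mp h2⟩,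
         fun ⟨h, h2⟩ => ⟨h, (two_pos_iff hp hn h).mpr h2⟩⟩)
  have hA : Finite {x : {T : ℕ × ℕ → ℕ // IsSYT p T} // x.1 (1, 0) = 2} := Finite.of_equiv _ e2.symm
  have hB : Finite {x : {T : ℕ × ℕ → ℕ // IsSYT p T} // ¬ x.1 (1, 0) = 2} := Finite.of_equiv _ e3.symm
  calc fSYT p = Nat.card ({x : {T : ℕ × ℕ → ℕ // IsSYT p T} // x.1 (1, 0) = 2} ⊕
       {x : {T : ℕ × ℕ → ℕ // IsSYT p T} // ¬ x.1 (1, 0) = 2}) := Nat.card_congr e1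
    _ = Nat.card {x : {T : ℕ × ℕ → ℕ // IsSYT p T} // x.1 (1, 0) = 2} +
        Nat.card {x : {T : ℕ × ℕ → ℕ // IsSYT p T} // ¬ x.1 (1, 0) = 2} := Nat.card_sum
    _ = gSYT p + gSYT p := by
        rw [Nat.card_congr e2, Nat.card_congr (e3.trans eBA)]; rfl
    _ = 2 * gSYT p := by ring

theorem selfConjugate_chiral_iff
    (k ε : ℕ) (hk : 2 ≤ k) (hε : ε ≤ 1) (p : Nat.Partition (2 ^ k + ε))
    (hp : IsSelfConjugate p) :
    IsChiral p ↔ padicValNat 2 (fSYT p) = 1 := by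
  have hn : 2 ≤ 2 ^ k + ε := by
    have : 2 ^ 2 ≤ 2 ^ k := Nat.pow_le_pow_right (by norm_num) hk
    omega
  have hf := fSYT_eq_two_gSYT hp hn
  rcases Nat.eq_zero_or_pos (gSYT p) with hg | hg
  · rw [hf, hg]
    simp [IsChiral, hg]
  · rw [hf, padicValNat.mul (p := 2) two_ne_zero (by omega),
      padicValNat.self (by norm_num)]
    have h0 : padicValNat 2 (gSYT p) = 0 ↔ ¬ 2 ∣ gSYT p := by
      rw [padicValNat.eq_zero_iff]
      have : gSYT p ≠ 0 := by omega
      simp [this]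
    unfold IsChiral
    rcases Nat.even_or_odd (gSYT p) with he | ho
    · have h2 : 2 ∣ gSYT p := he.two_dvd
      have hv : padicValNat 2 (gSYT p) ≠ 0 := fun hh => (h0.mp hh) h2
      constructor
      · intro h; exact absurd he (Nat.not_even_iff_odd.mpr h)
      · intro h; omega
    · have h2 : ¬ 2 ∣ gSYT p := by rw [Nat.odd_iff] at ho; omega
      have hv := h0.mpr h2
      simp [ho, hv]

end ChiralPaper
end

section
/- For all integers a ≥ 0 and b ≥ 0, the hook partition h(a,b) = (a+1, 1^b) (a partition of a+b+1) is chiral if and only if b > 0 and the binomial coefficient binom(a+b−1, a) is odd. -/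
namespace ChiralPaper

/- ===== auxiliary development for hook_chiral_iff ===== -/

theorem mem_cells_hook (a b : ℕ) (c : ℕ × ℕ) :
    c ∈ cells (hook a b) ↔ (c.2 = 0 ∧ c.1 ≤ b) ∨ (c.1 = 0 ∧ 1 ≤ c.2 ∧ c.2 ≤ a) := by
  simp only [cells, hook, Finset.mem_filter, Finset.mem_product, Finset.mem_range,
    Multiset.filter_cons]
  rcases Nat.lt_or_ge c.2 1 with h2 | h2
  · have hz : c.2 = 0 := by omega
    rw [hz, if_pos (by omega),
      Multiset.filter_eq_self.2 (fun x hx => by have := Multiset.eq_of_mem_replicate hx; omega)]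
    simp
    omega
  · rcases le_or_gt c.2 a with h3 | h3
    · rw [if_pos (by omega),
        Multiset.filter_eq_nil.2 (fun x hx => by have := Multiset.eq_of_mem_replicate hx; omega)]
      simp
      omega
    · rw [if_neg (by omega),
        Multiset.filter_eq_nil.2 (fun x hx => by have := Multiset.eq_of_mem_replicate hx; omega)]
      simp
      omega

def emb (s : Finset ℕ) (k i : ℕ) : ℕ :=
  if h : s.card = k ∧ i < k then s.orderEmbOfFin h.1 ⟨i, h.2⟩ else 0

lemma emb_eq {s : Finset ℕ} {k i : ℕ} (h : s.card = k) (hi : i < k) :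
    emb s k i = s.orderEmbOfFin h ⟨i, hi⟩ := dif_pos ⟨h, hi⟩

lemma emb_mem {s : Finset ℕ} {k i : ℕ} (h : s.card = k) (hi : i < k) :
    emb s k i ∈ s := by rw [emb_eq h hi]; exact Finset.orderEmbOfFin_mem s h _

lemma emb_lt {s : Finset ℕ} {k i j : ℕ} (h : s.card = k) (hij : i < j) (hj : j < k) :
    emb s k i < emb s k j := by
  rw [emb_eq h (hij.trans hj), emb_eq h hj]
  exact (s.orderEmbOfFin h).strictMono (by exact hij)

lemma emb_zero {s : Finset ℕ} {k : ℕ} (h : s.card = k) (hk : 0 < k) :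
    emb s k 0 = s.min' (by rw [← Finset.card_pos, h]; exact hk) := by
  rw [emb_eq h hk]; exact Finset.orderEmbOfFin_zero h hk

lemma emb_surj {s : Finset ℕ} {k : ℕ} (h : s.card = k) {x : ℕ} (hx : x ∈ s) :
    ∃ i < k, emb s k i = x := by
  have : x ∈ Set.range (s.orderEmbOfFin h) := by
    rw [Finset.range_orderEmbOfFin]; exact_mod_cast hx
  obtain ⟨j, hj⟩ := this
  exact ⟨j, j.2, by rw [emb_eq h j.2]; simpa using hj⟩

lemma emb_lt_iff {s : Finset ℕ} {k i j : ℕ} (h : s.card = k) (hi : i < k) (hj : j < k) :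
    emb s k i < emb s k j ↔ i < j := by
  rw [emb_eq h hi, emb_eq h hj, OrderEmbedding.lt_iff_lt]
  exact Iff.rfl

lemma emb_inj {s : Finset ℕ} {k i j : ℕ} (h : s.card = k) (hi : i < k) (hj : j < k)
    (hij : emb s k i = emb s k j) : i = j := by
  rcases lt_trichotomy i j with h' | h' | h'
  · have := emb_lt h h' hj; omega
  · exact h'
  · have := emb_lt h h' hi; omega

/-- uniqueness: a strictly monotone enumeration of members of `s` is `emb`. -/
lemma emb_unique {s : Finset ℕ} {k : ℕ} (h : s.card = k) (f : ℕ → ℕ)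
    (hmem : ∀ i < k, f i ∈ s) (hmono : ∀ i j, i < j → j < k → f i < f j) :
    ∀ i < k, f i = emb s k i := by
  intro i hi
  have := Finset.orderEmbOfFin_unique h (f := fun j : Fin k => f j)
    (fun j => hmem j j.2) (fun x y hxy => hmono x y hxy y.2)
  rw [emb_eq h hi, ← this]

def colS (S : Finset ℕ) : Finset ℕ := insert 1 (insert 2 S)
def rowS (a b : ℕ) (S : Finset ℕ) : Finset ℕ :=
  insert 1 (Finset.Icc 1 (a+b+1) \ colS S)

section HookAux
variable {a b : ℕ} {S : Finset ℕ} (hb : 1 ≤ b)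
  (hS : S ⊆ Finset.Icc 3 (a+b+1)) (hc : S.card = b - 1)

include hS in
lemma mem_S_ge {x : ℕ} (hx : x ∈ S) : 3 ≤ x ∧ x ≤ a + b + 1 := by
  have := hS hx; simpa [Finset.mem_Icc] using this

include hb hS hc in
lemma card_colS : (colS S).card = b + 1 := by
  rw [colS, Finset.card_insert_of_notMem, Finset.card_insert_of_notMem, hc]
  · omega
  · intro h; have := mem_S_ge hS h; omega
  · simp only [Finset.mem_insert]
    rintro (h | h)
    · omega
    · have := mem_S_ge hS h; omega

include hb hS in
lemma colS_subset : colS S ⊆ Finset.Icc 1 (a+b+1) := by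
  intro x hx
  simp only [colS, Finset.mem_insert] at hx
  simp only [Finset.mem_Icc]
  rcases hx with h | h | h
  · omega
  · omega
  · have := mem_S_ge hS h; omega

include hb hS hc in
lemma card_rowS : (rowS a b S).card = a + 1 := by
  rw [rowS, Finset.card_insert_of_notMem (by simp [colS]),
    Finset.card_sdiff_of_subset (colS_subset hb hS), card_colS hb hS hc, Nat.card_Icc]
  omega

include hS in
lemma mem_colS_ge {x : ℕ} (hx : x ∈ colS S) : 1 ≤ x := by
  simp only [colS, Finset.mem_insert] at hx
  rcases hx with h | h | h
  · omega
  · omega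
  · have := mem_S_ge hS h; omega

include hb hS in
lemma colS_subset' : ∀ x ∈ colS S, x ∈ Set.Icc 1 (a+b+1) := by
  intro x hx
  have := colS_subset hb hS hx
  simpa [Finset.mem_Icc] using this

lemma rowS_subset : ∀ x ∈ rowS a b S, x ∈ Set.Icc 1 (a+b+1) := by
  intro x hx
  simp only [rowS, Finset.mem_insert, Finset.mem_sdiff, Finset.mem_Icc] at hx
  simp only [Set.mem_Icc]
  rcases hx with h | ⟨⟨h1, h2⟩, _⟩ <;> omega

include hS in
lemma min_colS : (colS S).min' (by simp [colS]) = 1 :=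
  le_antisymm (Finset.min'_le _ _ (by simp [colS]))
    ((Finset.le_min'_iff _ _).2 fun y hy => mem_colS_ge hS hy)

lemma mem_rowS_ge {x : ℕ} (hx : x ∈ rowS a b S) : 1 ≤ x := by
  simp only [rowS, Finset.mem_insert, Finset.mem_sdiff, Finset.mem_Icc] at hx
  rcases hx with h | ⟨⟨h, _⟩, _⟩ <;> omega

lemma min_rowS : (rowS a b S).min' (by simp [rowS]) = 1 :=
  le_antisymm (Finset.min'_le _ _ (by simp [rowS]))
    ((Finset.le_min'_iff _ _).2 fun y hy => mem_rowS_ge hy)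

include hb hS hc in
lemma emb_colS_zero : emb (colS S) (b+1) 0 = 1 := by
  rw [emb_zero (card_colS hb hS hc) (by omega)]; exact min_colS hS

include hb hS hc in
lemma emb_rowS_zero : emb (rowS a b S) (a+1) 0 = 1 := by
  rw [emb_zero (card_rowS hb hS hc) (by omega)]; exact min_rowS

include hb hS hc in
lemma emb_colS_one : emb (colS S) (b+1) 1 = 2 := by
  have hcard := card_colS hb hS hc
  obtain ⟨j, hjk, hj⟩ := emb_surj hcard (show (2:ℕ) ∈ colS S by simp [colS])
  have h0 := emb_colS_zero hb hS hc
  have hj0 : j ≠ 0 := by intro h; rw [h] at hj; omega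
  have h1lt : 1 < b + 1 := by omega
  rcases lt_trichotomy j 1 with h | h | h
  · omega
  · rwa [h] at hj
  · exfalso
    have := emb_lt hcard h hjk
    have hmem := emb_mem hcard h1lt
    have hge := mem_colS_ge hS hmem
    have := emb_lt hcard (show 0 < 1 by omega) h1lt
    omega

lemma mem_rowS_not_colS {x : ℕ} (hx : x ∈ rowS a b S) (hx1 : x ≠ 1) : x ∉ colS S := by
  simp only [rowS, Finset.mem_insert, Finset.mem_sdiff] at hx
  rcases hx with h | ⟨_, h⟩
  · exact absurd h hx1
  · exact h

def mkT (a b : ℕ) (S : Finset ℕ) : ℕ × ℕ → ℕ := fun c =>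
  if c.2 = 0 ∧ c.1 ≤ b then emb (colS S) (b+1) c.1
  else if c.1 = 0 ∧ 1 ≤ c.2 ∧ c.2 ≤ a then emb (rowS a b S) (a+1) c.2
  else 0

lemma mkT_col {i : ℕ} (hi : i ≤ b) : mkT a b S (i, 0) = emb (colS S) (b+1) i :=
  if_pos ⟨rfl, hi⟩

lemma mkT_row {j : ℕ} (hj1 : 1 ≤ j) (hja : j ≤ a) :
    mkT a b S (0, j) = emb (rowS a b S) (a+1) j := by
  rw [mkT, if_neg (by simp; omega), if_pos ⟨rfl, hj1, hja⟩]

include hb hS hc in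
lemma mkT_one_zero : mkT a b S (1, 0) = 2 := by
  rw [mkT_col hb]; exact emb_colS_one hb hS hc

include hb hS hc in
lemma mkT_isSYT : IsSYT (hook a b) (mkT a b S) := by
  have hcc := card_colS hb hS hc
  have hcr := card_rowS hb hS hc
  refine ⟨⟨?_, ?_, ?_⟩, ?_, ?_⟩
  · -- MapsTo
    intro c hc'
    rw [Finset.mem_coe, mem_cells_hook] at hc'
    obtain ⟨c1, c2⟩ := c
    rcases hc' with ⟨h1, h2⟩ | ⟨h1, h2, h3⟩
    · simp only at h1 h2; subst h1
      rw [mkT_col h2]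
      exact colS_subset' hb hS _ (emb_mem hcc (by omega))
    · simp only at h1 h2 h3; subst h1
      rw [mkT_row h2 h3]
      exact rowS_subset _ (emb_mem hcr (by omega))
  · -- InjOn
    intro c hc' d hd' he
    rw [Finset.mem_coe, mem_cells_hook] at hc' hd'
    obtain ⟨c1, c2⟩ := c; obtain ⟨d1, d2⟩ := d
    simp only at hc' hd' ⊢
    rcases hc' with ⟨hc1, hc2⟩ | ⟨hc1, hc2, hc3⟩ <;>
      rcases hd' with ⟨hd1, hd2⟩ | ⟨hd1, hd2, hd3⟩
    · subst hc1; subst hd1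
      rw [mkT_col hc2, mkT_col hd2] at he
      rw [emb_inj hcc (by omega) (by omega) he]
    · -- c column, d row
      subst hc1; subst hd1
      rw [mkT_col hc2, mkT_row hd2 hd3] at he
      exfalso
      have hrne : emb (rowS a b S) (a+1) d2 ≠ 1 := by
        have h0 := emb_rowS_zero hb hS hc
        have := emb_lt hcr (show 0 < d2 by omega) (by omega)
        omega
      have := mem_rowS_not_colS (emb_mem hcr (by omega)) hrne
      rw [← he] at this
      exact this (emb_mem hcc (by omega))
    · subst hc1; subst hd1
      rw [mkT_col hd2, mkT_row hc2 hc3] at he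
      exfalso
      have hrne : emb (rowS a b S) (a+1) c2 ≠ 1 := by
        have h0 := emb_rowS_zero hb hS hc
        have := emb_lt hcr (show 0 < c2 by omega) (by omega)
        omega
      have := mem_rowS_not_colS (emb_mem hcr (by omega)) hrne
      rw [he] at this
      exact this (emb_mem hcc (by omega))
    · subst hc1; subst hd1
      rw [mkT_row hc2 hc3, mkT_row hd2 hd3] at he
      rw [emb_inj hcr (by omega) (by omega) he]
  · -- SurjOn
    intro y hy
    simp only [Set.mem_Icc] at hy
    by_cases hcol : y ∈ colS S
    · obtain ⟨i, hik, hi⟩ := emb_surj hcc hcol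
      refine ⟨(i, 0), ?_, ?_⟩
      · rw [Finset.mem_coe, mem_cells_hook]; left; exact ⟨rfl, by omega⟩
      · rw [mkT_col (by omega)]; exact hi
    · have hrow : y ∈ rowS a b S := by
        simp only [rowS, Finset.mem_insert, Finset.mem_sdiff, Finset.mem_Icc]
        right; exact ⟨⟨hy.1, hy.2⟩, hcol⟩
      obtain ⟨j, hjk, hj⟩ := emb_surj hcr hrow
      have hj0 : j ≠ 0 := by
        intro h; rw [h, emb_rowS_zero hb hS hc] at hj
        exact hcol (by rw [← hj]; simp [colS])
      refine ⟨(0, j), ?_, ?_⟩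
      · rw [Finset.mem_coe, mem_cells_hook]; right; exact ⟨rfl, by omega, by omega⟩
      · rw [mkT_row (by omega) (by omega)]; exact hj
  · -- vanishing
    intro x hx
    rw [mem_cells_hook] at hx
    push_neg at hx
    rw [mkT, if_neg, if_neg]
    · intro ⟨h1, h2, h3⟩; have := hx.2 h1; omega
    · intro ⟨h1, h2⟩; have := hx.1 h1; omega
  · -- strictness
    intro c hc' d hd' h1 h2 hne
    rw [mem_cells_hook] at hc' hd'
    obtain ⟨c1, c2⟩ := c; obtain ⟨d1, d2⟩ := d
    simp only at hc' hd' h1 h2 ⊢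
    rcases hc' with ⟨hc1, hc2⟩ | ⟨hc1, hc2, hc3⟩ <;>
      rcases hd' with ⟨hd1, hd2⟩ | ⟨hd1, hd2, hd3⟩
    · subst hc1; subst hd1
      have : c1 < d1 := by
        rcases Nat.lt_or_ge c1 d1 with h | h
        · exact h
        · exfalso; exact hne (by simp; omega)
      rw [mkT_col hc2, mkT_col hd2]
      exact emb_lt (card_colS hb hS hc) this (by omega)
    · -- c column, d row: c = (0,0)
      subst hc1; subst hd1
      have hc10 : c1 = 0 := by omega
      subst hc10
      rw [mkT_col (by omega), mkT_row hd2 hd3, emb_colS_zero hb hS hc]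
      have h0 := emb_rowS_zero hb hS hc
      have := emb_lt (card_rowS hb hS hc) (show 0 < d2 by omega) (by omega)
      omega
    · omega
    · subst hc1; subst hd1
      have : c2 < d2 := by
        rcases Nat.lt_or_ge c2 d2 with h | h
        · exact h
        · exfalso; exact hne (by simp; omega)
      rw [mkT_row hc2 hc3, mkT_row hd2 hd3]
      exact emb_lt (card_rowS hb hS hc) this (by omega)

end HookAux

section HookRev
variable {a b : ℕ} {T : ℕ × ℕ → ℕ} (hb : 1 ≤ b)
  (hT : IsSYT (hook a b) T) (h2 : T (1, 0) = 2)

include hT in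
lemma T_col_mono {i j : ℕ} (hij : i < j) (hj : j ≤ b) : T (i, 0) < T (j, 0) := by
  refine hT.2.2 (i,0) ?_ (j,0) ?_ (by omega) le_rfl (by simp; omega)
  · rw [mem_cells_hook]; left; exact ⟨rfl, by omega⟩
  · rw [mem_cells_hook]; left; exact ⟨rfl, hj⟩

include hT in
lemma T_row_mono {i j : ℕ} (hij : i < j) (hj : j ≤ a) : T (0, i) < T (0, j) := by
  refine hT.2.2 (0,i) ?_ (0,j) ?_ le_rfl (by omega) (by simp; omega)
  · rw [mem_cells_hook]
    rcases Nat.eq_zero_or_pos i with h | h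
    · left; exact ⟨h, by omega⟩
    · right; exact ⟨rfl, by omega, by omega⟩
  · rw [mem_cells_hook]; right; exact ⟨rfl, by omega, hj⟩

include hT in
lemma T_mem_Icc {c : ℕ × ℕ} (hc : c ∈ cells (hook a b)) : T c ∈ Set.Icc 1 (a+b+1) :=
  hT.1.1 hc

include hT in
lemma T_zero_zero : T (0, 0) = 1 := by
  obtain ⟨c, hc, hc1⟩ := hT.1.2.2 (show (1:ℕ) ∈ Set.Icc 1 (a+b+1) by simp)
  rw [Finset.mem_coe] at hc
  by_cases h : c = (0, 0)
  · rw [← h]; exact hc1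
  · exfalso
    have hcell0 : (0, 0) ∈ cells (hook a b) := by
      rw [mem_cells_hook]; left; exact ⟨rfl, by omega⟩
    have hlt : T (0, 0) < T c := by
      refine hT.2.2 (0,0) hcell0 c hc (by omega) (by omega) (by exact fun hh => h hh.symm)
    have := T_mem_Icc hT hcell0
    simp only [Set.mem_Icc] at this
    omega

def extT (b : ℕ) (T : ℕ × ℕ → ℕ) : Finset ℕ := (Finset.Icc 2 b).image fun i => T (i, 0)

include hT h2 in
lemma extT_subset : extT b T ⊆ Finset.Icc 3 (a+b+1) := by
  intro x hx
  simp only [extT, Finset.mem_image, Finset.mem_Icc] at hx ⊢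
  obtain ⟨i, ⟨hi2, hib⟩, rfl⟩ := hx
  constructor
  · have := T_col_mono hT (show 1 < i by omega) hib
    omega
  · have := T_mem_Icc hT (c := (i, 0)) (by rw [mem_cells_hook]; left; exact ⟨rfl, hib⟩)
    simp only [Set.mem_Icc] at this
    exact this.2

include hT in
lemma extT_card : (extT b T).card = b - 1 := by
  rw [extT, Finset.card_image_of_injOn]
  · rw [Nat.card_Icc]; omega
  intro i hi j hj he
  simp only [Finset.coe_Icc, Set.mem_Icc] at hi hj
  replace he : T (i, 0) = T (j, 0) := he
  rcases lt_trichotomy i j with h | h | h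
  · have := T_col_mono hT h hj.2; omega
  · exact h
  · have := T_col_mono hT h hi.2; omega

include hb hT h2 in
lemma colS_extT : colS (extT b T) = (Finset.range (b+1)).image fun i => T (i, 0) := by
  ext x
  simp only [colS, extT, Finset.mem_insert, Finset.mem_image, Finset.mem_Icc, Finset.mem_range]
  constructor
  · rintro (rfl | rfl | ⟨i, ⟨hi2, hib⟩, rfl⟩)
    · exact ⟨0, by omega, T_zero_zero hT⟩
    · exact ⟨1, by omega, h2⟩
    · exact ⟨i, by omega, rfl⟩
  · rintro ⟨i, hi, rfl⟩
    rcases Nat.lt_or_ge i 2 with h | h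
    · interval_cases i
      · left; exact T_zero_zero hT
      · right; left; exact h2
    · right; right; exact ⟨i, ⟨h, by omega⟩, rfl⟩

include hb hT h2 in
lemma T_col_eq : ∀ i ≤ b, T (i, 0) = emb (colS (extT b T)) (b+1) i := by
  have hcc := card_colS hb (extT_subset hT h2) (extT_card hT)
  intro i hi
  refine emb_unique hcc (fun i => T (i, 0)) ?_ (fun i j hij hj => T_col_mono hT hij (by omega)) i (by omega)
  intro j hj
  rw [colS_extT hb hT h2]
  simp only [Finset.mem_image, Finset.mem_range]
  exact ⟨j, hj, rfl⟩

include hb hT h2 in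
lemma T_row_eq : ∀ j ≤ a, T (0, j) = emb (rowS a b (extT b T)) (a+1) j := by
  have hcr := card_rowS hb (extT_subset hT h2) (extT_card hT)
  intro j hj
  refine emb_unique hcr (fun j => T (0, j)) ?_ (fun i j hij hj => T_row_mono hT hij (by omega)) j (by omega)
  intro k hk
  rcases Nat.eq_zero_or_pos k with h | h
  · subst h
    show T (0, 0) ∈ rowS a b (extT b T)
    rw [T_zero_zero hT]
    simp [rowS]
  · have hcell : (0, k) ∈ cells (hook a b) := by
      rw [mem_cells_hook]; right; exact ⟨rfl, by omega, by omega⟩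
    have hmem := T_mem_Icc hT hcell
    simp only [Set.mem_Icc] at hmem
    have hnot : T (0, k) ∉ colS (extT b T) := by
      rw [colS_extT hb hT h2]
      simp only [Finset.mem_image, Finset.mem_range]
      rintro ⟨i, hi, he⟩
      have hcell' : (i, 0) ∈ cells (hook a b) := by
        rw [mem_cells_hook]; left; exact ⟨rfl, by omega⟩
      have := hT.1.2.1 (Finset.mem_coe.2 hcell') (Finset.mem_coe.2 hcell) he
      simp at this
      omega
    simp only [rowS, Finset.mem_insert, Finset.mem_sdiff, Finset.mem_Icc]
    right; exact ⟨⟨hmem.1, hmem.2⟩, hnot⟩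

include hb hT h2 in
lemma mkT_extT : mkT a b (extT b T) = T := by
  funext c
  obtain ⟨c1, c2⟩ := c
  rw [mkT]
  by_cases h1 : c2 = 0 ∧ c1 ≤ b
  · rw [if_pos (by exact h1)]
    obtain ⟨rfl, hc1⟩ := h1
    exact (T_col_eq hb hT h2 c1 hc1).symm
  · rw [if_neg (by exact h1)]
    by_cases h2' : c1 = 0 ∧ 1 ≤ c2 ∧ c2 ≤ a
    · rw [if_pos (by exact h2')]
      obtain ⟨rfl, hc2, hc3⟩ := h2'
      exact (T_row_eq hb hT h2 c2 hc3).symm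
    · rw [if_neg (by exact h2')]
      refine (hT.2.1 (c1, c2) ?_).symm
      rw [mem_cells_hook]
      simp only at h1 h2' ⊢
      tauto

end HookRev

section LeftInv
variable {a b : ℕ} {S : Finset ℕ} (hb : 1 ≤ b)
  (hS : S ⊆ Finset.Icc 3 (a+b+1)) (hc : S.card = b - 1)

include hb hS hc in
lemma extT_mkT : extT b (mkT a b S) = S := by
  have hcc := card_colS hb hS hc
  ext x
  simp only [extT, Finset.mem_image, Finset.mem_Icc]
  constructor
  · rintro ⟨i, ⟨hi2, hib⟩, rfl⟩
    rw [mkT_col hib]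
    have hmem := emb_mem hcc (show i < b + 1 by omega)
    have hgt : 2 < emb (colS S) (b+1) i := by
      have := emb_colS_one hb hS hc
      have := emb_lt hcc (show 1 < i by omega) (show i < b+1 by omega)
      omega
    rcases Finset.mem_insert.1 hmem with h | h
    · omega
    rcases Finset.mem_insert.1 h with h | h
    · omega
    · exact h
  · intro hx
    have hmem : x ∈ colS S := by simp [colS, hx]
    obtain ⟨i, hik, hi⟩ := emb_surj hcc hmem
    have hge := mem_S_ge hS hx
    have hi0 : i ≠ 0 := by
      intro h; rw [h, emb_colS_zero hb hS hc] at hi; omega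
    have hi1 : i ≠ 1 := by
      intro h; rw [h, emb_colS_one hb hS hc] at hi; omega
    exact ⟨i, ⟨by omega, by omega⟩, by rw [mkT_col (by omega)]; exact hi⟩

end LeftInv

lemma gSYT_hook_pos {a b : ℕ} (hb : 1 ≤ b) :
    gSYT (hook a b) = (a + b - 1).choose a := by
  have he : {S : Finset ℕ // S ∈ (Finset.Icc 3 (a+b+1)).powersetCard (b-1)} ≃
      {T : ℕ × ℕ → ℕ // IsSYT (hook a b) T ∧ T (1, 0) = 2} := by
    refine ⟨fun S => ⟨mkT a b S.1, ?_, ?_⟩, fun T => ⟨extT b T.1, ?_⟩, ?_, ?_⟩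
    · obtain ⟨hsub, hcard⟩ := Finset.mem_powersetCard.1 S.2
      exact mkT_isSYT hb hsub hcard
    · obtain ⟨hsub, hcard⟩ := Finset.mem_powersetCard.1 S.2
      exact mkT_one_zero hb hsub hcard
    · exact Finset.mem_powersetCard.2 ⟨extT_subset T.2.1 T.2.2, extT_card T.2.1⟩
    · intro S
      obtain ⟨hsub, hcard⟩ := Finset.mem_powersetCard.1 S.2
      exact Subtype.ext (extT_mkT hb hsub hcard)
    · intro T
      exact Subtype.ext (mkT_extT hb T.2.1 T.2.2)
  rw [gSYT, ← Nat.card_congr he, Nat.card_eq_finsetCard, Finset.card_powersetCard, Nat.card_Icc,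
    show a + b + 1 + 1 - 3 = a + b - 1 by omega,
    show b - 1 = (a + b - 1) - a by omega,
    Nat.choose_symm (by omega)]

lemma gSYT_hook_zero {a : ℕ} : gSYT (hook a 0) = 0 := by
  have : IsEmpty {T : ℕ × ℕ → ℕ // IsSYT (hook a 0) T ∧ T (1, 0) = 2} := by
    refine ⟨fun T => ?_⟩
    obtain ⟨T, hT, h2⟩ := T
    have : (1, 0) ∉ cells (hook a 0) := by
      rw [mem_cells_hook]; simp
    have := hT.2.1 _ this
    omega
  rw [gSYT, Nat.card_of_isEmpty]

theorem hook_chiral_iff (a b : ℕ) :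
    IsChiral (hook a b) ↔ 0 < b ∧ Odd ((a + b - 1).choose a) := by
  rcases Nat.eq_zero_or_pos b with rfl | hb
  · rw [IsChiral, gSYT_hook_zero]
    simp
  · rw [IsChiral, gSYT_hook_pos hb]
    simp [hb]

end ChiralPaper
end

section
/- Let n ≥ 2 and let λ = (λ₁,…,λ_l) be a partition of n. Then the number of ordered set partitions x ∈ X_λ in which the elements 1 and 2 lie in different blocks equals 2·∑_{1≤i<j≤l} multinomial(n−2; λ₁,…,λ_i−1,…,λ_j−1,…,λ_l). Consequently the permutation representation C[X_λ] is chiral if and only if ∑_{1≤i<j≤l} multinomial(n−2; λ₁,…,λ_i−1,…,λ_j−1,…,λ_l) is odd. -/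
namespace ChiralPaper

/-- The second component of a sigma element with prescribed first component. -/
def sigmaFstEquiv {ι : Type*} (γ : ι → Type*) (i : ι) :
    {b : Σ j, γ j // b.1 = i} ≃ γ i where
  toFun b := b.2 ▸ b.1.2
  invFun c := ⟨⟨i, c⟩, rfl⟩
  left_inv := by rintro ⟨⟨j, c⟩, rfl⟩; rfl
  right_inv c := rfl

section A
variable {α : Type*} [Fintype α] [DecidableEq α] {l : ℕ} (mu : Fin l → ℕ)

abbrev Dtype (mu : Fin l → ℕ) := Σ f : α → Fin l, Π i, ({a // f a = i} ≃ Fin (mu i))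

def FmapA : (α ≃ Σ i, Fin (mu i)) → Dtype (α := α) mu := fun e =>
  ⟨fun a => (e a).1, fun i => (e.subtypeEquiv (fun _ => Iff.rfl)).trans
    (sigmaFstEquiv _ i)⟩

def GmapA : Dtype (α := α) mu → (α ≃ Σ i, Fin (mu i)) := fun p =>
  (Equiv.sigmaFiberEquiv p.1).symm.trans (Equiv.sigmaCongrRight p.2)

def reconA (p : Dtype (α := α) mu) : α → Σ i, Fin (mu i) :=
  fun a => ⟨p.1 a, p.2 (p.1 a) ⟨a, rfl⟩⟩

lemma reconA_FmapA (e : α ≃ Σ i, Fin (mu i)) :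
    reconA mu (FmapA mu e) = fun a => e a := rfl

lemma FmapA_inj : Function.Injective (FmapA (α := α) mu) := by
  intro e e' h
  apply Equiv.ext
  intro a
  calc e a = reconA mu (FmapA mu e) a := (congrFun (reconA_FmapA mu e) a).symm
    _ = reconA mu (FmapA mu e') a := by rw [h]
    _ = e' a := congrFun (reconA_FmapA mu e') a

lemma GmapA_apply (p : Dtype (α := α) mu) (a : α) :
    GmapA mu p a = ⟨p.1 a, p.2 (p.1 a) ⟨a, rfl⟩⟩ := rfl

lemma GmapA_inj : Function.Injective (GmapA (α := α) mu) := by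
  rintro ⟨f, h⟩ ⟨f', h'⟩ hGG
  have hpt : ∀ a, (⟨f a, h (f a) ⟨a, rfl⟩⟩ : Σ i, Fin (mu i)) =
      ⟨f' a, h' (f' a) ⟨a, rfl⟩⟩ := by
    intro a
    exact (GmapA_apply mu ⟨f, h⟩ a).symm.trans
      ((Equiv.ext_iff.mp hGG a).trans (GmapA_apply mu ⟨f', h'⟩ a))
  have hf : f = f' := funext fun a => congrArg Sigma.fst (hpt a)
  subst hf
  have hh : h = h' := by
    funext i
    apply Equiv.ext
    intro x
    obtain ⟨a, ha⟩ := x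
    subst ha
    have := hpt a
    rw [Sigma.mk.inj_iff] at this
    exact eq_of_heq this.2
  rw [hh]

lemma card_fiber_count (hsum : ∑ i, mu i = Fintype.card α) :
    Nat.card {f : α → Fin l // ∀ i, Fintype.card {a // f a = i} = mu i} =
      Nat.multinomial Finset.univ mu := by
  classical
  have hcardβ : Fintype.card α = Fintype.card (Σ i, Fin (mu i)) := by
    simp [Fintype.card_sigma, hsum]
  have hE : Nat.card (α ≃ Σ i, Fin (mu i)) = (Fintype.card α).factorial := by
    rw [Nat.card_eq_fintype_card]
    exact Fintype.card_equiv (Fintype.equivOfCardEq hcardβ)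
  have hED : Nat.card (α ≃ Σ i, Fin (mu i)) = Nat.card (Dtype (α := α) mu) :=
    le_antisymm (Nat.card_le_card_of_injective _ (FmapA_inj mu))
      (Nat.card_le_card_of_injective _ (GmapA_inj mu))
  have hD : Nat.card (Dtype (α := α) mu) =
      Nat.card {f : α → Fin l // ∀ i, Fintype.card {a // f a = i} = mu i} *
        ∏ i, (mu i).factorial := by
    rw [Nat.card_eq_fintype_card, Nat.card_eq_fintype_card]
    rw [Fintype.card_sigma]
    have hterm : ∀ f : α → Fin l,
        Fintype.card (Π i, ({a // f a = i} ≃ Fin (mu i))) =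
          if (∀ i, Fintype.card {a // f a = i} = mu i) then ∏ i, (mu i).factorial else 0 := by
      intro f
      rw [Fintype.card_pi]
      by_cases hf : ∀ i, Fintype.card {a // f a = i} = mu i
      · rw [if_pos hf]
        refine Finset.prod_congr rfl fun i _ => ?_
        rw [Fintype.card_equiv (Fintype.equivOfCardEq (by simp [hf i]))]
        rw [hf i]
      · rw [if_neg hf]
        push_neg at hf
        obtain ⟨i, hi⟩ := hf
        refine Finset.prod_eq_zero (Finset.mem_univ i) ?_
        rw [Fintype.card_eq_zero_iff]
        constructor
        intro e
        exact hi (by simpa using Fintype.card_congr e)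
    rw [Finset.sum_congr rfl fun f _ => hterm f]
    rw [Finset.sum_ite, Finset.sum_const_zero, add_zero, Finset.sum_const]
    rw [Fintype.card_subtype, smul_eq_mul]
  have hfac : (∏ i, (mu i).factorial) * Nat.multinomial Finset.univ mu = (Fintype.card α).factorial := by
    rw [← hsum]; exact Nat.multinomial_spec _ _
  have : Nat.card {f : α → Fin l // ∀ i, Fintype.card {a // f a = i} = mu i} *
      ∏ i, (mu i).factorial = Nat.multinomial Finset.univ mu * ∏ i, (mu i).factorial := by
    rw [← hD, ← hED, hE, ← hfac]; ring
  exact Nat.eq_of_mul_eq_mul_right (Finset.prod_pos fun i _ => Nat.factorial_pos _) this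

end A

lemma card_subtype_filter {α : Type*} [DecidableEq α] (A : Finset α) (P : α → Prop)
    [DecidablePred P] : Fintype.card {a : ↥A // P ↑a} = (A.filter P).card := by
  rw [Fintype.card_subtype, Finset.univ_eq_attach, Finset.filter_attach,
    Finset.card_map, Finset.card_attach]

lemma Icc_split {n : ℕ} (hn : 2 ≤ n) :
    Finset.Icc 1 n = insert 1 (insert 2 (Finset.Icc 3 n)) := by
  ext x
  simp only [Finset.mem_Icc, Finset.mem_insert]
  omega

lemma card_filter_split {n : ℕ} (hn : 2 ≤ n) (p : ℕ → Prop) [DecidablePred p] :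
    ((Finset.Icc 1 n).filter p).card =
      ((Finset.Icc 3 n).filter p).card
        + (if p 1 then 1 else 0) + (if p 2 then 1 else 0) := by
  rw [Icc_split hn, Finset.filter_insert, Finset.filter_insert]
  have h2 : (2 : ℕ) ∉ (Finset.Icc 3 n).filter p := by
    simp only [Finset.mem_filter, Finset.mem_Icc]; omega
  have h1 : (1 : ℕ) ∉ (Finset.Icc 3 n).filter p := by
    simp only [Finset.mem_filter, Finset.mem_Icc]; omega
  have h1' : (1 : ℕ) ∉ insert 2 ((Finset.Icc 3 n).filter p) := by
    simp only [Finset.mem_insert]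
    push_neg
    exact ⟨by omega, h1⟩
  by_cases hp1 : p 1 <;> by_cases hp2 : p 2
  · rw [if_pos hp1, if_pos hp2, if_pos hp1, if_pos hp2,
      Finset.card_insert_of_notMem h1', Finset.card_insert_of_notMem h2]
  · rw [if_pos hp1, if_neg hp2, if_pos hp1, if_neg hp2,
      Finset.card_insert_of_notMem h1]
  · rw [if_neg hp1, if_pos hp2, if_neg hp1, if_pos hp2,
      Finset.card_insert_of_notMem h2]
  · rw [if_neg hp1, if_neg hp2, if_neg hp1, if_neg hp2]
    omega




variable {n l : ℕ} (lam : Fin l → ℕ)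

def muU (q : Fin l × Fin l) : Fin l → ℕ :=
  Function.update (Function.update lam q.1 (lam q.1 - 1)) q.2 (lam q.2 - 1)

lemma muU_add (hpos : ∀ i, 0 < lam i) {q : Fin l × Fin l} (hq : q.1 ≠ q.2) (i : Fin l) :
    muU lam q i + (if i = q.1 then 1 else 0) + (if i = q.2 then 1 else 0) = lam i := by
  have h1 := hpos q.1
  have h2 := hpos q.2
  rcases eq_or_ne i q.2 with e2 | e2
  · subst e2
    rw [muU, Function.update_self, if_pos rfl, if_neg (Ne.symm hq)]
    omega
  rcases eq_or_ne i q.1 with e1 | e1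
  · subst e1
    rw [muU, Function.update_of_ne e2, Function.update_self, if_pos rfl, if_neg e2]
    omega
  · rw [muU, Function.update_of_ne e2, Function.update_of_ne e1, if_neg e1, if_neg e2]
    omega

lemma muU_sum (hpos : ∀ i, 0 < lam i) (hsum : ∑ i, lam i = n)
    {q : Fin l × Fin l} (hq : q.1 ≠ q.2) : ∑ i, muU lam q i = n - 2 := by
  classical
  have h1 : q.1 ∈ Finset.univ \ {q.2} := by simp [hq]
  have h2 := hpos q.1
  have h3 := hpos q.2
  rw [muU, Finset.sum_update_of_mem (Finset.mem_univ q.2),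
    Finset.sum_update_of_mem h1]
  have e1 := Finset.sum_eq_add_sum_sdiff_singleton_of_mem (Finset.mem_univ q.2) lam
  have e2 := Finset.sum_eq_add_sum_sdiff_singleton_of_mem h1 lam
  omega

lemma muU_comm {q : Fin l × Fin l} (hq : q.1 ≠ q.2) : muU lam q.swap = muU lam q :=
  Function.update_comm (Ne.symm hq) _ _ _

def reconF (n : ℕ) (q : Fin l × Fin l) (g : ↥(Finset.Icc 3 n) → Fin l) : ℕ → ℕ :=
  fun x =>
    if x = 1 then (q.1 : ℕ) + 1
    else if x = 2 then (q.2 : ℕ) + 1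
    else if h : x ∈ Finset.Icc 3 n then (g ⟨x, h⟩ : ℕ) + 1 else 0

lemma reconF_one (q : Fin l × Fin l) (g : ↥(Finset.Icc 3 n) → Fin l) :
    reconF n q g 1 = (q.1 : ℕ) + 1 := rfl

lemma reconF_two (q : Fin l × Fin l) (g : ↥(Finset.Icc 3 n) → Fin l) :
    reconF n q g 2 = (q.2 : ℕ) + 1 := rfl

lemma reconF_mem (q : Fin l × Fin l) (g : ↥(Finset.Icc 3 n) → Fin l) {x : ℕ}
    (hx : x ∈ Finset.Icc 3 n) : reconF n q g x = (g ⟨x, hx⟩ : ℕ) + 1 := by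
  have h3 : 3 ≤ x := (Finset.mem_Icc.mp hx).1
  simp only [reconF]
  rw [if_neg (by omega), if_neg (by omega), dif_pos hx]

lemma reconF_zero (q : Fin l × Fin l) (g : ↥(Finset.Icc 3 n) → Fin l) {x : ℕ}
    (hx1 : x ≠ 1) (hx2 : x ≠ 2) (hx : x ∉ Finset.Icc 3 n) : reconF n q g x = 0 := by
  simp only [reconF]
  rw [if_neg hx1, if_neg hx2, dif_neg hx]

lemma gm_osp (hn : 2 ≤ n) (hpos : ∀ i, 0 < lam i) (q : Fin l × Fin l) (hq : q.1 ≠ q.2)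
    (g : ↥(Finset.Icc 3 n) → Fin l)
    (hg : ∀ i, Fintype.card {a // g a = i} = muU lam q i) :
    IsOSP n l lam (reconF n q g) ∧ reconF n q g 1 ≠ reconF n q g 2 := by
  classical
  constructor
  · refine ⟨?_, ?_, ?_⟩
    · intro x hx
      rw [Finset.mem_Icc] at hx
      refine reconF_zero q g (by omega) (by omega) ?_
      rw [Finset.mem_Icc]; omega
    · intro x hx
      rw [Finset.mem_Icc] at hx
      rcases eq_or_ne x 1 with rfl | hx1
      · rw [reconF_one, Finset.mem_Icc]
        have := (q.1).isLt; omega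
      rcases eq_or_ne x 2 with rfl | hx2
      · rw [reconF_two, Finset.mem_Icc]
        have := (q.2).isLt; omega
      · have hx3 : x ∈ Finset.Icc 3 n := by rw [Finset.mem_Icc]; omega
        rw [reconF_mem q g hx3, Finset.mem_Icc]
        have := (g ⟨x, hx3⟩).isLt; omega
    · intro i
      rw [card_filter_split hn]
      have e1 : (reconF n q g 1 = (i : ℕ) + 1) ↔ i = q.1 := by
        rw [reconF_one, Fin.ext_iff]; omega
      have e2 : (reconF n q g 2 = (i : ℕ) + 1) ↔ i = q.2 := by
        rw [reconF_two, Fin.ext_iff]; omega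
      have e3 : ((Finset.Icc 3 n).filter fun x => reconF n q g x = (i : ℕ) + 1).card
          = muU lam q i := by
        rw [← card_subtype_filter, ← hg i]
        apply Fintype.card_congr
        apply Equiv.subtypeEquivRight
        intro a
        rw [reconF_mem q g a.2, Fin.ext_iff]
        simp only [Subtype.coe_eta]
        omega
      rw [e3]
      simp only [e1, e2]
      have := muU_add lam hpos hq i
      split_ifs at this ⊢ <;> omega
  · rw [reconF_one, reconF_two]
    intro h
    exact hq (Fin.ext (by omega))


variable {n l : ℕ} (lam : Fin l → ℕ)

lemma fm_fiber (hn : 2 ≤ n) (hpos : ∀ i, 0 < lam i) (f : ℕ → ℕ)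
    (hosp : IsOSP n l lam f) (i1 i2 : Fin l)
    (h1 : (i1 : ℕ) = f 1 - 1) (h2 : (i2 : ℕ) = f 2 - 1) (hq : i1 ≠ i2)
    (g : ↥(Finset.Icc 3 n) → Fin l) (hg : ∀ a, (g a : ℕ) = f ↑a - 1) (i : Fin l) :
    Fintype.card {a // g a = i} = muU lam (i1, i2) i := by
  classical
  have h1m : (1 : ℕ) ∈ Finset.Icc 1 n := by rw [Finset.mem_Icc]; omega
  have h2m : (2 : ℕ) ∈ Finset.Icc 1 n := by rw [Finset.mem_Icc]; omega
  have hf1 := Finset.mem_Icc.mp (hosp.2.1 1 h1m)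
  have hf2 := Finset.mem_Icc.mp (hosp.2.1 2 h2m)
  have key := hosp.2.2 i
  rw [card_filter_split hn] at key
  have hA : Fintype.card {a // g a = i} =
      ((Finset.Icc 3 n).filter fun x => f x = (i : ℕ) + 1).card := by
    rw [← card_subtype_filter]
    apply Fintype.card_congr
    apply Equiv.subtypeEquivRight
    intro a
    have ham : (a : ℕ) ∈ Finset.Icc 1 n := by
      have := Finset.mem_Icc.mp a.2
      rw [Finset.mem_Icc]; omega
    have hfa := Finset.mem_Icc.mp (hosp.2.1 a ham)
    have := hg a
    rw [Fin.ext_iff]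
    omega
  have iff1 : (f 1 = (i : ℕ) + 1) ↔ i = i1 := by rw [Fin.ext_iff, h1]; omega
  have iff2 : (f 2 = (i : ℕ) + 1) ↔ i = i2 := by rw [Fin.ext_iff, h2]; omega
  have key2 := muU_add lam hpos (q := (i1, i2)) hq i
  simp only [iff1, iff2] at key
  rw [hA]
  split_ifs at key key2 <;> omega

abbrev OSPSig (n : ℕ) {l : ℕ} (lam : Fin l → ℕ) :=
  Σ q : {q : Fin l × Fin l // q.1 ≠ q.2},
    {g : ↥(Finset.Icc 3 n) → Fin l // ∀ i, Fintype.card {a // g a = i} = muU lam q.1 i}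

def FmAux (hn : 2 ≤ n) (hpos : ∀ i, 0 < lam i) (f : ℕ → ℕ) (hosp : IsOSP n l lam f)
    (hne : f 1 ≠ f 2) : OSPSig n lam := by
  have h1m : (1 : ℕ) ∈ Finset.Icc 1 n := by rw [Finset.mem_Icc]; omega
  have h2m : (2 : ℕ) ∈ Finset.Icc 1 n := by rw [Finset.mem_Icc]; omega
  have hf1 := Finset.mem_Icc.mp (hosp.2.1 1 h1m)
  have hf2 := Finset.mem_Icc.mp (hosp.2.1 2 h2m)
  refine ⟨⟨(⟨f 1 - 1, by omega⟩, ⟨f 2 - 1, by omega⟩), by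
    simp only [ne_eq, Prod.mk.injEq, Fin.mk.injEq]; omega⟩,
    ⟨fun a => ⟨f ↑a - 1, ?_⟩, ?_⟩⟩
  · have ham : (a : ℕ) ∈ Finset.Icc 1 n := by
      have := Finset.mem_Icc.mp a.2
      rw [Finset.mem_Icc]; omega
    have hfa := Finset.mem_Icc.mp (hosp.2.1 a ham)
    omega
  · intro i
    exact fm_fiber lam hn hpos f hosp _ _ rfl rfl
      (by simp only [ne_eq, Fin.mk.injEq]; omega) _ (fun a => rfl) i

lemma reconF_FmAux (hn : 2 ≤ n) (hpos : ∀ i, 0 < lam i) (f : ℕ → ℕ)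
    (hosp : IsOSP n l lam f) (hne : f 1 ≠ f 2) :
    reconF n (FmAux lam hn hpos f hosp hne).1.1 (FmAux lam hn hpos f hosp hne).2.1 = f := by
  have h1m : (1 : ℕ) ∈ Finset.Icc 1 n := by rw [Finset.mem_Icc]; omega
  have h2m : (2 : ℕ) ∈ Finset.Icc 1 n := by rw [Finset.mem_Icc]; omega
  have hf1 := Finset.mem_Icc.mp (hosp.2.1 1 h1m)
  have hf2 := Finset.mem_Icc.mp (hosp.2.1 2 h2m)
  funext x
  rcases eq_or_ne x 1 with rfl | hx1
  · rw [reconF_one]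
    show f 1 - 1 + 1 = f 1
    omega
  rcases eq_or_ne x 2 with rfl | hx2
  · rw [reconF_two]
    show f 2 - 1 + 1 = f 2
    omega
  by_cases hx3 : x ∈ Finset.Icc 3 n
  · rw [reconF_mem _ _ hx3]
    have ham : x ∈ Finset.Icc 1 n := by
      have := Finset.mem_Icc.mp hx3
      rw [Finset.mem_Icc]; omega
    have hfa := Finset.mem_Icc.mp (hosp.2.1 x ham)
    show f x - 1 + 1 = f x
    omega
  · rw [reconF_zero _ _ hx1 hx2 hx3]
    refine (hosp.1 x ?_).symm
    rw [Finset.mem_Icc] at hx3 ⊢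
    omega


variable {n l : ℕ} (lam : Fin l → ℕ)

def Fm (hn : 2 ≤ n) (hpos : ∀ i, 0 < lam i) :
    {f : ℕ → ℕ // IsOSP n l lam f ∧ f 1 ≠ f 2} → OSPSig n lam :=
  fun x => FmAux lam hn hpos x.1 x.2.1 x.2.2

def Gm (hn : 2 ≤ n) (hpos : ∀ i, 0 < lam i) :
    OSPSig n lam → {f : ℕ → ℕ // IsOSP n l lam f ∧ f 1 ≠ f 2} :=
  fun p => ⟨reconF n p.1.1 p.2.1, gm_osp lam hn hpos p.1.1 p.1.2 p.2.1 p.2.2⟩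

lemma Fm_inj (hn : 2 ≤ n) (hpos : ∀ i, 0 < lam i) :
    Function.Injective (Fm lam hn hpos) := by
  intro x y h
  apply Subtype.ext
  calc x.1 = reconF n (Fm lam hn hpos x).1.1 (Fm lam hn hpos x).2.1 :=
        (reconF_FmAux lam hn hpos x.1 x.2.1 x.2.2).symm
    _ = reconF n (Fm lam hn hpos y).1.1 (Fm lam hn hpos y).2.1 := by rw [h]
    _ = y.1 := reconF_FmAux lam hn hpos y.1 y.2.1 y.2.2

lemma Gm_inj (hn : 2 ≤ n) (hpos : ∀ i, 0 < lam i) :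
    Function.Injective (Gm lam hn hpos) := by
  rintro ⟨⟨⟨a1, a2⟩, hq⟩, g, hg⟩ ⟨⟨⟨b1, b2⟩, hq'⟩, g', hg'⟩ h
  have hr : reconF n (a1, a2) g = reconF n (b1, b2) g' := congrArg Subtype.val h
  have e1 : a1 = b1 := by
    have := congrFun hr 1
    rw [reconF_one, reconF_one] at this
    have h' : (a1 : ℕ) + 1 = (b1 : ℕ) + 1 := this
    exact Fin.ext (by omega)
  have e2 : a2 = b2 := by
    have := congrFun hr 2
    rw [reconF_two, reconF_two] at this
    have h' : (a2 : ℕ) + 1 = (b2 : ℕ) + 1 := this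
    exact Fin.ext (by omega)
  subst e1
  subst e2
  have e3 : g = g' := by
    funext a
    have := congrFun hr ↑a
    rw [reconF_mem _ _ a.2, reconF_mem _ _ a.2] at this
    simp only [Subtype.coe_eta] at this
    exact Fin.ext (by omega)
  subst e3
  rfl

lemma card_eq_sig (hn : 2 ≤ n) (hpos : ∀ i, 0 < lam i) :
    Nat.card {f : ℕ → ℕ // IsOSP n l lam f ∧ f 1 ≠ f 2} = Nat.card (OSPSig n lam) := by
  classical
  have hfin : Finite {f : ℕ → ℕ // IsOSP n l lam f ∧ f 1 ≠ f 2} :=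
    Finite.of_injective _ (Fm_inj lam hn hpos)
  exact le_antisymm (Nat.card_le_card_of_injective _ (Fm_inj lam hn hpos))
    (Nat.card_le_card_of_injective _ (Gm_inj lam hn hpos))

lemma card_sig (hn : 2 ≤ n) (hpos : ∀ i, 0 < lam i) (hsum : ∑ i, lam i = n) :
    Nat.card (OSPSig n lam) =
      2 * ∑ q ∈ Finset.univ.filter (fun q : Fin l × Fin l => q.1 < q.2),
        Nat.multinomial Finset.univ (muU lam q) := by
  classical
  rw [Nat.card_eq_fintype_card, Fintype.card_sigma]
  have hcc : Fintype.card ↥(Finset.Icc 3 n) = n - 2 := by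
    rw [Fintype.card_coe, Nat.card_Icc]
    omega
  have hterm : ∀ q : {q : Fin l × Fin l // q.1 ≠ q.2},
      Fintype.card {g : ↥(Finset.Icc 3 n) → Fin l //
        ∀ i, Fintype.card {a // g a = i} = muU lam q.1 i} =
      Nat.multinomial Finset.univ (muU lam q.1) := by
    intro q
    rw [← Nat.card_eq_fintype_card]
    apply card_fiber_count
    rw [hcc, muU_sum lam hpos hsum q.2]
  rw [Finset.sum_congr rfl (fun q _ => hterm q)]
  rw [← Finset.sum_subtype (Finset.univ.filter fun q : Fin l × Fin l => q.1 ≠ q.2)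
    (by simp) (fun q => Nat.multinomial Finset.univ (muU lam q))]
  have hsplit : (Finset.univ.filter fun q : Fin l × Fin l => q.1 ≠ q.2) =
      (Finset.univ.filter fun q : Fin l × Fin l => q.1 < q.2) ∪
        (Finset.univ.filter fun q : Fin l × Fin l => q.2 < q.1) := by
    ext q
    simp only [Finset.mem_filter, Finset.mem_union, Finset.mem_univ, true_and]
    constructor
    · exact fun h => lt_or_gt_of_ne h
    · rintro (h | h)
      · exact ne_of_lt h
      · exact ne_of_gt h
  have hdisj : Disjoint (Finset.univ.filter fun q : Fin l × Fin l => q.1 < q.2)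
      (Finset.univ.filter fun q : Fin l × Fin l => q.2 < q.1) := by
    rw [Finset.disjoint_left]
    intro q h1 h2
    simp only [Finset.mem_filter] at h1 h2
    exact lt_asymm h1.2 h2.2
  rw [hsplit, Finset.sum_union hdisj]
  have hswap : ∑ q ∈ (Finset.univ.filter fun q : Fin l × Fin l => q.2 < q.1),
      Nat.multinomial Finset.univ (muU lam q)
      = ∑ q ∈ (Finset.univ.filter fun q : Fin l × Fin l => q.1 < q.2),
        Nat.multinomial Finset.univ (muU lam q) := by
    refine Finset.sum_nbij' (i := Prod.swap) (j := Prod.swap) ?_ ?_ ?_ ?_ ?_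
    · intro q hq
      simp only [Finset.mem_filter, Finset.mem_univ, true_and] at hq ⊢
      exact hq
    · intro q hq
      simp only [Finset.mem_filter, Finset.mem_univ, true_and] at hq ⊢
      exact hq
    · intro q _; exact Prod.swap_swap q
    · intro q _; exact Prod.swap_swap q
    · intro q hq
      simp only [Finset.mem_filter, Finset.mem_univ, true_and] at hq
      rw [muU_comm lam (ne_of_gt hq)]
  rw [hswap]
  omega

lemma swap_ne_iff (f : ℕ → ℕ) : f ∘ (Equiv.swap 1 2) ≠ f ↔ f 1 ≠ f 2 := by
  apply not_congr
  constructor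
  · intro h
    have := congrFun h 1
    simp only [Function.comp_apply, Equiv.swap_apply_left] at this
    exact this.symm
  · intro h
    funext x
    simp only [Function.comp_apply]
    rcases eq_or_ne x 1 with rfl | h1
    · rw [Equiv.swap_apply_left]; exact h.symm
    rcases eq_or_ne x 2 with rfl | h2
    · rw [Equiv.swap_apply_right]; exact h
    · rw [Equiv.swap_apply_of_ne_of_ne h1 h2]


lemma two_mul_mod_four (S : ℕ) : 2 * S % 4 = 2 ↔ S % 2 = 1 := by omega

theorem movedCount_eq_two_mul_sum
    (n : ℕ) (hn : 2 ≤ n) (l : ℕ) (lam : Fin l → ℕ)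
    (hpos : ∀ i, 0 < lam i) (hanti : Antitone lam) (hsum : ∑ i, lam i = n) :
    movedCount n l lam =
      2 * ∑ q ∈ Finset.univ.filter fun q : Fin l × Fin l => q.1 < q.2,
        Nat.multinomial Finset.univ
          (Function.update (Function.update lam q.1 (lam q.1 - 1)) q.2
            (lam q.2 - 1)) ∧
    (PermChiral n l lam ↔
      Odd (∑ q ∈ Finset.univ.filter fun q : Fin l × Fin l => q.1 < q.2,
        Nat.multinomial Finset.univ
          (Function.update (Function.update lam q.1 (lam q.1 - 1)) q.2
            (lam q.2 - 1)))) := by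
  classical
  have h1 : movedCount n l lam =
      Nat.card {f : ℕ → ℕ // IsOSP n l lam f ∧ f 1 ≠ f 2} :=
    Nat.card_congr (Equiv.subtypeEquivRight fun f =>
      and_congr_right fun _ => swap_ne_iff f)
  have key : movedCount n l lam =
      2 * ∑ q ∈ Finset.univ.filter fun q : Fin l × Fin l => q.1 < q.2,
        Nat.multinomial Finset.univ
          (Function.update (Function.update lam q.1 (lam q.1 - 1)) q.2
            (lam q.2 - 1)) := by
    rw [h1, card_eq_sig lam hn hpos, card_sig lam hn hpos hsum]
    rfl
  refine ⟨key, ?_⟩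
  have hpc : PermChiral n l lam ↔ movedCount n l lam % 4 = 2 := Iff.rfl
  rw [hpc, key, Nat.odd_iff]
  exact two_mul_mod_four _

end ChiralPaper
end

section
/- Let n ≥ 2 and let λ be a partition of n. If the number of odd parts of λ is zero or at least four, then C[X_λ] is not chiral. Consequently, if n is even and C[X_λ] is chiral then λ has exactly two odd parts, and if n is odd and C[X_λ] is chiral then λ has exactly one or exactly three odd parts. -/
namespace ChiralPaper

section Aux

open Finset

/-- Part sizes indexed by values in `{1, …, l}`. -/
noncomputable def Lam (l : ℕ) (lam : Fin l → ℕ) (v : ℕ) : ℕ :=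
  if h : 1 ≤ v ∧ v ≤ l then lam ⟨v - 1, by omega⟩ else 0

/-- Residual part sizes after removing one element with value `a` and one with value `b`. -/
noncomputable def muu (l : ℕ) (lam : Fin l → ℕ) (a b v : ℕ) : ℕ :=
  Lam l lam v - (if v = a then 1 else 0) - (if v = b then 1 else 0)

lemma Lam_eq {l : ℕ} (lam : Fin l → ℕ) {v : ℕ} (h1 : 1 ≤ v) (h2 : v ≤ l) :
    Lam l lam v = lam ⟨v - 1, by omega⟩ := dif_pos ⟨h1, h2⟩

lemma Lam_pos {l : ℕ} {lam : Fin l → ℕ} (hpos : ∀ i, 0 < lam i) {v : ℕ}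
    (h1 : 1 ≤ v) (h2 : v ≤ l) : 1 ≤ Lam l lam v := by
  rw [Lam_eq lam h1 h2]; exact hpos _

lemma count_all {n l : ℕ} {lam : Fin l → ℕ} {f : ℕ → ℕ} (hf : IsOSP n l lam f)
    {v : ℕ} (h1 : 1 ≤ v) (h2 : v ≤ l) :
    ((Finset.Icc 1 n).filter fun x => f x = v).card = Lam l lam v := by
  have h := hf.2.2 ⟨v - 1, by omega⟩
  have hv : ((⟨v - 1, by omega⟩ : Fin l) : ℕ) + 1 = v := by
    show v - 1 + 1 = v; omega
  rw [hv] at h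
  rw [Lam_eq lam h1 h2, ← h]

lemma count_split {n : ℕ} (hn : 2 ≤ n) (g : ℕ → ℕ) (v : ℕ) :
    ((Finset.Icc 1 n).filter fun x => g x = v).card =
      (if g 1 = v then 1 else 0) + (if g 2 = v then 1 else 0) +
        ((Finset.Icc 3 n).filter fun x => g x = v).card := by
  have hsplit : Finset.Icc 1 n = insert 1 (insert 2 (Finset.Icc 3 n)) := by
    ext x; simp only [Finset.mem_Icc, Finset.mem_insert]; omega
  have h1m : (1:ℕ) ∉ insert 2 ((Finset.Icc 3 n).filter fun x => g x = v) := by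
    simp [Finset.mem_Icc]
  have h2m : (2:ℕ) ∉ (Finset.Icc 3 n).filter fun x => g x = v := by
    simp [Finset.mem_Icc]
  have h1m' : (1:ℕ) ∉ (Finset.Icc 3 n).filter fun x => g x = v := by
    simp [Finset.mem_Icc]
  rw [hsplit, Finset.filter_insert, Finset.filter_insert]
  split_ifs with h1 h2
  · rw [Finset.card_insert_of_notMem h1m, Finset.card_insert_of_notMem h2m]; omega
  · rw [Finset.card_insert_of_notMem h1m']; omega
  · rw [Finset.card_insert_of_notMem h2m]; omega
  · omega

lemma count_tail_iff {n l : ℕ} {lam : Fin l → ℕ} (hn : 2 ≤ n) {g : ℕ → ℕ} {a b v : ℕ}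
    (ha : g 1 = a) (hb : g 2 = b) (hab : a ≠ b)
    (hLa : 1 ≤ Lam l lam a) (hLb : 1 ≤ Lam l lam b) :
    (((Finset.Icc 1 n).filter fun x => g x = v).card = Lam l lam v ↔
      ((Finset.Icc 3 n).filter fun x => g x = v).card = muu l lam a b v) := by
  have hs := count_split hn g v
  rw [ha, hb] at hs
  rw [muu]
  rcases eq_or_ne v a with rfl | hva
  · rw [if_pos rfl, if_neg hab]
    rw [if_pos rfl, if_neg (fun h : b = v => hab h.symm)] at hs
    omega
  rcases eq_or_ne v b with rfl | hvb
  · rw [if_neg (fun h : v = a => hva h), if_pos rfl]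
    rw [if_neg (fun h : a = v => hva h.symm), if_pos rfl] at hs
    omega
  · rw [if_neg hva, if_neg hvb]
    rw [if_neg (fun h : a = v => hva h.symm), if_neg (fun h : b = v => hvb h.symm)] at hs
    omega

lemma odd_card_transfer {l : ℕ} (lam : Fin l → ℕ) :
    ((Finset.Icc 1 l).filter fun v => Odd (Lam l lam v)).card
      = (Finset.univ.filter fun i : Fin l => Odd (lam i)).card := by
  apply Finset.card_bij (fun v hv => (⟨v - 1, by
    simp only [Finset.mem_filter, Finset.mem_Icc] at hv; omega⟩ : Fin l))
  · intro v hv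
    simp only [Finset.mem_filter, Finset.mem_Icc] at hv
    simp only [Finset.mem_filter, Finset.mem_univ, true_and]
    rw [← Lam_eq lam hv.1.1 hv.1.2]
    exact hv.2
  · intro v hv w hw hvw
    simp only [Finset.mem_filter, Finset.mem_Icc] at hv hw
    have := congrArg Fin.val hvw
    simp only at this
    omega
  · intro i hi
    simp only [Finset.mem_filter, Finset.mem_univ, true_and] at hi
    refine ⟨(i : ℕ) + 1, ?_, ?_⟩
    · simp only [Finset.mem_filter, Finset.mem_Icc]
      refine ⟨⟨by omega, by omega⟩, ?_⟩
      rw [Lam_eq lam (by omega) (by omega)]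
      have hi' : (⟨(i : ℕ) + 1 - 1, by omega⟩ : Fin l) = i := by
        ext; simp
      rw [hi']
      exact hi
    · ext
      simp

lemma choose_even {m k : ℕ} (hk : Odd k) (hm : Even m) (hkm : k ≤ m) :
    2 ∣ m.choose k := by
  obtain ⟨k', rfl⟩ : ∃ k', k = k' + 1 := ⟨k - 1, by rcases hk with ⟨t, ht⟩; omega⟩
  obtain ⟨m', rfl⟩ : ∃ m', m = m' + 1 := ⟨m - 1, by omega⟩
  have h := Nat.add_one_mul_choose_eq m' k'
  have h2 : 2 ∣ (m' + 1) * Nat.choose m' k' := by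
    exact Dvd.dvd.mul_right (by rcases hm with ⟨t, ht⟩; omega) _
  rw [h] at h2
  rcases (Nat.Prime.dvd_mul Nat.prime_two).mp h2 with h3 | h3
  · simpa using h3
  · exfalso
    rw [Nat.odd_iff] at hk
    omega

lemma sum_parity' {l : ℕ} (lam : Fin l → ℕ) (s : Finset (Fin l)) :
    (∑ i ∈ s, lam i) % 2 = (s.filter fun i => Odd (lam i)).card % 2 := by
  classical
  induction s using Finset.induction_on with
  | empty => simp
  | @insert a s ha ih =>
    rw [Finset.sum_insert ha, Finset.filter_insert]
    by_cases h : Odd (lam a)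
    · rw [if_pos h, Finset.card_insert_of_notMem (fun hc => ha (Finset.mem_filter.mp hc).1)]
      rw [Nat.odd_iff] at h
      omega
    · rw [if_neg h]
      rw [Nat.odd_iff] at h
      omega

lemma isOSP_finite (n l : ℕ) (lam : Fin l → ℕ) :
    {f : ℕ → ℕ | IsOSP n l lam f ∧ f 1 ≠ f 2}.Finite := by
  classical
  have hsub : {f : ℕ → ℕ | IsOSP n l lam f ∧ f 1 ≠ f 2} ⊆
      Set.range (fun g : (Finset.Icc 1 n) → Fin (l + 1) => fun x : ℕ =>
        if h : x ∈ Finset.Icc 1 n then (g ⟨x, h⟩ : ℕ) else 0) := by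
    rintro f ⟨hf, -⟩
    refine ⟨fun x => ⟨f x.1, ?_⟩, ?_⟩
    · have := hf.2.1 x.1 x.2
      simp only [Finset.mem_Icc] at this
      omega
    · funext x
      by_cases h : x ∈ Finset.Icc 1 n
      · simp [h]
      · simp [h, hf.1 x h]
  exact Set.Finite.subset (Set.finite_range _) hsub

lemma isOSP_comp_swap {n l : ℕ} {lam : Fin l → ℕ} (hn : 2 ≤ n) {f : ℕ → ℕ}
    (hf : IsOSP n l lam f) : IsOSP n l lam (f ∘ Equiv.swap 1 2) := by
  have h1 : (1:ℕ) ∈ Finset.Icc 1 n := by simp [Finset.mem_Icc]; omega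
  have h2 : (2:ℕ) ∈ Finset.Icc 1 n := by simp [Finset.mem_Icc]; omega
  refine ⟨?_, ?_, ?_⟩
  · intro x hx
    have hx1 : x ≠ 1 := fun h => hx (h ▸ h1)
    have hx2 : x ≠ 2 := fun h => hx (h ▸ h2)
    simp only [Function.comp_apply, Equiv.swap_apply_of_ne_of_ne hx1 hx2]
    exact hf.1 x hx
  · intro x hx
    simp only [Function.comp_apply]
    rcases eq_or_ne x 1 with rfl | hx1
    · rw [Equiv.swap_apply_left]; exact hf.2.1 2 h2
    rcases eq_or_ne x 2 with rfl | hx2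
    · rw [Equiv.swap_apply_right]; exact hf.2.1 1 h1
    · rw [Equiv.swap_apply_of_ne_of_ne hx1 hx2]; exact hf.2.1 x hx
  · intro i
    rw [← hf.2.2 i]
    apply Finset.card_equiv (Equiv.swap 1 2)
    intro x
    simp only [Finset.mem_filter, Function.comp_apply]
    have hmem : x ∈ Finset.Icc 1 n ↔ Equiv.swap 1 2 x ∈ Finset.Icc 1 n := by
      rcases eq_or_ne x 1 with rfl | hx1
      · rw [Equiv.swap_apply_left]; exact iff_of_true h1 h2
      rcases eq_or_ne x 2 with rfl | hx2
      · rw [Equiv.swap_apply_right]; exact iff_of_true h2 h1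
      · rw [Equiv.swap_apply_of_ne_of_ne hx1 hx2]
    rw [hmem]

end Aux


theorem permChiral_odd_parts
    (n : ℕ) (hn : 2 ≤ n) (l : ℕ) (lam : Fin l → ℕ)
    (hpos : ∀ i, 0 < lam i) (hanti : Antitone lam) (hsum : ∑ i, lam i = n) :
    (((Finset.univ.filter fun i => Odd (lam i)).card = 0 ∨
        4 ≤ (Finset.univ.filter fun i => Odd (lam i)).card) →
      ¬ PermChiral n l lam) ∧
    (Even n → PermChiral n l lam →
      (Finset.univ.filter fun i => Odd (lam i)).card = 2) ∧
    (Odd n → PermChiral n l lam →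
      ((Finset.univ.filter fun i => Odd (lam i)).card = 1 ∨
        (Finset.univ.filter fun i => Odd (lam i)).card = 3)) := by
  classical
  have key : (((Finset.univ.filter fun i => Odd (lam i)).card = 0 ∨
      4 ≤ (Finset.univ.filter fun i => Odd (lam i)).card) → ¬ PermChiral n l lam) := by
    intro hcond hchi
    have h1n : (1:ℕ) ∈ Finset.Icc 1 n := by simp only [Finset.mem_Icc]; omega
    have h2n : (2:ℕ) ∈ Finset.Icc 1 n := by simp only [Finset.mem_Icc]; omega
    have h13 : (1:ℕ) ∉ Finset.Icc 3 n := by simp only [Finset.mem_Icc]; omega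
    have h23 : (2:ℕ) ∉ Finset.Icc 3 n := by simp only [Finset.mem_Icc]; omega
    have hfin := isOSP_finite n l lam
    set s : Finset (ℕ → ℕ) := hfin.toFinset with hs_def
    have hmem : ∀ f, f ∈ s ↔ IsOSP n l lam f ∧ f 1 ≠ f 2 := by
      intro f; rw [hs_def, Set.Finite.mem_toFinset]; rfl
    -- movedCount equals s.card
    have hmc : movedCount n l lam = s.card := by
      have e : {f : ℕ → ℕ // IsOSP n l lam f ∧ f ∘ (Equiv.swap 1 2) ≠ f} ≃
          {f : ℕ → ℕ // IsOSP n l lam f ∧ f 1 ≠ f 2} := by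
        apply Equiv.subtypeEquivRight
        intro f
        constructor
        · rintro ⟨hf1, hf2⟩
          refine ⟨hf1, fun he => hf2 ?_⟩
          funext x
          simp only [Function.comp_apply, Equiv.swap_apply_def]
          split_ifs with e1 e2
          · subst e1; exact he.symm
          · subst e2; exact he
          · rfl
        · rintro ⟨hf1, hf2⟩
          refine ⟨hf1, fun he => hf2 ?_⟩
          have h := congrFun he 1
          simp only [Function.comp_apply, Equiv.swap_apply_left] at h
          exact h.symm
      rw [movedCount, Nat.card_congr e]
      have : {f : ℕ → ℕ // IsOSP n l lam f ∧ f 1 ≠ f 2} =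
          ↥{f : ℕ → ℕ | IsOSP n l lam f ∧ f 1 ≠ f 2} := rfl
      rw [this, Nat.card_coe_set_eq, Set.ncard_eq_toFinset_card _ hfin]
    set s1 : Finset (ℕ → ℕ) := s.filter (fun f => f 1 < f 2) with hs1
    set s2 : Finset (ℕ → ℕ) := s.filter (fun f => f 2 < f 1) with hs2
    have hsplit : s1.card + s2.card = s.card := by
      rw [hs1, hs2]
      have hneg : s.filter (fun f => f 2 < f 1) = s.filter (fun f => ¬ f 1 < f 2) := by
        apply Finset.filter_congr
        intro f hf
        have hne := ((hmem f).mp hf).2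
        constructor
        · intro h hlt; omega
        · intro h; omega
      rw [hneg]
      exact Finset.card_filter_add_card_filter_not _
    have hcard12 : s1.card = s2.card := by
      apply Finset.card_nbij' (i := fun f => f ∘ Equiv.swap 1 2) (j := fun f => f ∘ Equiv.swap 1 2)
      · intro f hf
        rw [hs1, Finset.mem_coe, Finset.mem_filter] at hf
        obtain ⟨hosp, hne⟩ := (hmem f).mp hf.1
        have e1 : (f ∘ Equiv.swap 1 2) 1 = f 2 := by
          simp only [Function.comp_apply, Equiv.swap_apply_left]
        have e2 : (f ∘ Equiv.swap 1 2) 2 = f 1 := by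
          simp only [Function.comp_apply, Equiv.swap_apply_right]
        rw [hs2, Finset.mem_coe, Finset.mem_filter]
        refine ⟨(hmem _).mpr ⟨isOSP_comp_swap hn hosp, ?_⟩, ?_⟩
        · beta_reduce; rw [e1, e2]; exact hne.symm
        · beta_reduce; rw [e1, e2]; exact hf.2
      · intro f hf
        rw [hs2, Finset.mem_coe, Finset.mem_filter] at hf
        obtain ⟨hosp, hne⟩ := (hmem f).mp hf.1
        have e1 : (f ∘ Equiv.swap 1 2) 1 = f 2 := by
          simp only [Function.comp_apply, Equiv.swap_apply_left]
        have e2 : (f ∘ Equiv.swap 1 2) 2 = f 1 := by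
          simp only [Function.comp_apply, Equiv.swap_apply_right]
        rw [hs1, Finset.mem_coe, Finset.mem_filter]
        refine ⟨(hmem _).mpr ⟨isOSP_comp_swap hn hosp, ?_⟩, ?_⟩
        · beta_reduce; rw [e1, e2]; exact hne.symm
        · beta_reduce; rw [e1, e2]; exact hf.2
      · intro f _
        funext x
        simp only [Function.comp_apply, Equiv.swap_apply_self]
      · intro f _
        funext x
        simp only [Function.comp_apply, Equiv.swap_apply_self]
    -- choice of two odd residual values
    have hex : ∀ a b : ℕ, ∃ p : ℕ × ℕ, 1 ≤ a → a ≤ l → 1 ≤ b → b ≤ l → a ≠ b →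
        (1 ≤ p.1 ∧ p.1 ≤ l ∧ 1 ≤ p.2 ∧ p.2 ≤ l ∧ p.1 ≠ p.2 ∧
          Odd (muu l lam a b p.1) ∧ Odd (muu l lam a b p.2)) := by
      intro a b
      by_cases hc : 1 ≤ a ∧ a ≤ l ∧ 1 ≤ b ∧ b ≤ l ∧ a ≠ b
      · obtain ⟨h1a, h2a, h1b, h2b, hab⟩ := hc
        rcases hcond with h0 | h4
        · refine ⟨(a, b), fun _ _ _ _ _ => ?_⟩
          have hall : ∀ v, 1 ≤ v → v ≤ l → ¬ Odd (Lam l lam v) := by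
            intro v hv1 hv2 hodd
            have hz : ((Finset.Icc 1 l).filter fun v => Odd (Lam l lam v)).card = 0 := by
              rw [odd_card_transfer lam]; exact h0
            rw [Finset.card_eq_zero] at hz
            have hvmem : v ∈ (Finset.Icc 1 l).filter fun v => Odd (Lam l lam v) := by
              simp only [Finset.mem_filter, Finset.mem_Icc]
              exact ⟨⟨hv1, hv2⟩, hodd⟩
            rw [hz] at hvmem
            exact absurd hvmem (Finset.notMem_empty v)
          refine ⟨h1a, h2a, h1b, h2b, hab, ?_, ?_⟩
          · have hLa := Lam_pos hpos h1a h2a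
            have hev := hall a h1a h2a
            show Odd (muu l lam a b a)
            rw [muu, if_pos rfl, if_neg hab]
            rw [Nat.odd_iff] at hev ⊢
            omega
          · have hLb := Lam_pos hpos h1b h2b
            have hev := hall b h1b h2b
            show Odd (muu l lam a b b)
            rw [muu, if_neg (fun h : b = a => hab h.symm), if_pos rfl]
            rw [Nat.odd_iff] at hev ⊢
            omega
        · have h4' : 4 ≤ ((Finset.Icc 1 l).filter fun v => Odd (Lam l lam v)).card := by
            rw [odd_card_transfer lam]; exact h4
          set O := (Finset.Icc 1 l).filter fun v => Odd (Lam l lam v) with hO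
          have h2le : 1 < (O \ {a, b}).card := by
            have hsub := Finset.card_le_card_sdiff_add_card (s := O) (t := ({a, b} : Finset ℕ))
            have hc2 : ({a, b} : Finset ℕ).card ≤ 2 := Finset.card_insert_le _ _ |>.trans (by simp)
            omega
          obtain ⟨c, hcm, d, hdm, hcd⟩ := Finset.one_lt_card.mp h2le
          simp only [hO, Finset.mem_sdiff, Finset.mem_filter, Finset.mem_Icc,
            Finset.mem_insert, Finset.mem_singleton, not_or] at hcm hdm
          refine ⟨(c, d), fun _ _ _ _ _ => ?_⟩
          refine ⟨hcm.1.1.1, hcm.1.1.2, hdm.1.1.1, hdm.1.1.2, hcd, ?_, ?_⟩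
          · rw [muu, if_neg hcm.2.1, if_neg hcm.2.2]
            simpa using hcm.1.2
          · rw [muu, if_neg hdm.2.1, if_neg hdm.2.2]
            simpa using hdm.1.2
      · exact ⟨(0, 0), fun w1 w2 w3 w4 w5 => absurd ⟨w1, w2, w3, w4, w5⟩ hc⟩
    choose P hP using hex
    -- the merging map
    set Psi : (ℕ → ℕ) → (ℕ → ℕ) := fun f x =>
      if x ∈ Finset.Icc 3 n ∧ f x = (P (f 1) (f 2)).2 then (P (f 1) (f 2)).1 else f x with hPsi
    have h2div : 2 ∣ s1.card := by
      rw [Finset.card_eq_sum_card_fiberwise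
        (s := s1) (t := s1.image Psi) (f := Psi) (fun f hf => Finset.mem_image_of_mem _ hf)]
      apply Finset.dvd_sum
      intro h hh
      obtain ⟨f0, hf0, hPf0⟩ := Finset.mem_image.mp hh
      have hf0s1 := hf0
      rw [hs1, Finset.mem_filter] at hf0s1
      obtain ⟨hf0s, hf0lt⟩ := hf0s1
      obtain ⟨hosp0, hne0⟩ := (hmem f0).mp hf0s
      set a := f0 1 with ha
      set b := f0 2 with hb
      have h1a : 1 ≤ a ∧ a ≤ l := by
        have := hosp0.2.1 1 h1n
        simpa only [Finset.mem_Icc] using this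
      have h1b : 1 ≤ b ∧ b ≤ l := by
        have := hosp0.2.1 2 h2n
        simpa only [Finset.mem_Icc] using this
      obtain ⟨ha1', ha2', hb1', hb2', hab', hodd1, hodd2⟩ :=
        hP a b h1a.1 h1a.2 h1b.1 h1b.2 hne0
      set a' := (P a b).1 with ha'
      set b' := (P a b).2 with hb'
      have hLa := Lam_pos hpos h1a.1 h1a.2
      have hLb := Lam_pos hpos h1b.1 h1b.2
      -- Psi doesn't change values at 1, 2 and outside Icc 3 n
      have hPsi_eq : ∀ f : ℕ → ℕ, ∀ x, x ∉ Finset.Icc 3 n → Psi f x = f x := by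
        intro f x hx
        rw [hPsi]
        simp only
        rw [if_neg (by rintro ⟨hc, -⟩; exact hx hc)]
      have hh1 : h 1 = a := by rw [← hPf0, hPsi_eq f0 1 h13]
      have hh2 : h 2 = b := by rw [← hPf0, hPsi_eq f0 2 h23]
      have hfix : ∀ f : ℕ → ℕ, Psi f = h → f 1 = a ∧ f 2 = b := by
        intro f hf
        constructor
        · rw [← hPsi_eq f 1 h13, hf]; exact hh1
        · rw [← hPsi_eq f 2 h23, hf]; exact hh2
      -- description of Psi f x for f with f 1 = a, f 2 = b
      have hPsi_val : ∀ f : ℕ → ℕ, f 1 = a → f 2 = b → ∀ x ∈ Finset.Icc 3 n,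
          Psi f x = if f x = b' then a' else f x := by
        intro f hfa hfb x hx
        rw [hPsi]
        simp only [hfa, hfb, ← ha', ← hb']
        by_cases hc : f x = b'
        · rw [if_pos ⟨hx, hc⟩, if_pos hc]
        · rw [if_neg (by rintro ⟨-, hc'⟩; exact hc hc'), if_neg hc]
      have hPf0' : ∀ x ∈ Finset.Icc 3 n, h x = if f0 x = b' then a' else f0 x := by
        intro x hx
        rw [← hPf0, hPsi_val f0 rfl rfl x hx]
      set E := (Finset.Icc 3 n).filter (fun x => h x = a') with hE
      set k := muu l lam a b a' with hk
      have hEf0 : E = (Finset.Icc 3 n).filter (fun x => f0 x = a' ∨ f0 x = b') := by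
        rw [hE]
        apply Finset.filter_congr
        intro x hx
        rw [hPf0' x hx]
        by_cases hc : f0 x = b'
        · rw [if_pos hc]
          simp [hc]
        · rw [if_neg hc]
          constructor
          · intro hc'; exact Or.inl hc'
          · rintro (hc' | hc')
            · exact hc'
            · exact absurd hc' hc
      have hcount0 : ∀ v, 1 ≤ v → v ≤ l →
          ((Finset.Icc 3 n).filter fun x => f0 x = v).card = muu l lam a b v := by
        intro v h1v h2v
        exact (count_tail_iff hn rfl rfl hne0 hLa hLb).mp (count_all hosp0 h1v h2v)
      have hdisj : Disjoint ((Finset.Icc 3 n).filter (fun x => f0 x = a'))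
          ((Finset.Icc 3 n).filter (fun x => f0 x = b')) := by
        rw [Finset.disjoint_left]
        intro x hx1 hx2
        rw [Finset.mem_filter] at hx1 hx2
        exact hab' (hx1.2.symm.trans hx2.2)
      have hEcard : E.card = muu l lam a b a' + muu l lam a b b' := by
        rw [hEf0, Finset.filter_or, Finset.card_union_of_disjoint hdisj,
          hcount0 a' ha1' ha2', hcount0 b' hb1' hb2']
      have hcountf : ∀ f : ℕ → ℕ, f ∈ s1 → Psi f = h → ∀ v, 1 ≤ v → v ≤ l →
          ((Finset.Icc 3 n).filter fun x => f x = v).card = muu l lam a b v := by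
        intro f hfs1 hfh v h1v h2v
        obtain ⟨hf1, hf2⟩ := hfix f hfh
        rw [hs1, Finset.mem_filter] at hfs1
        obtain ⟨hosp, -⟩ := (hmem f).mp hfs1.1
        exact (count_tail_iff hn hf1 hf2 hne0 hLa hLb).mp (count_all hosp h1v h2v)
      have hEsub : E ⊆ Finset.Icc 3 n := by rw [hE]; exact Finset.filter_subset _ _
      have hbij : ((s1.filter fun f => Psi f = h)).card = (E.powersetCard k).card := by
        apply Finset.card_bij (fun f _ => (Finset.Icc 3 n).filter fun x => f x = a')
        · intro f hf
          rw [Finset.mem_filter] at hf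
          obtain ⟨hfs1, hfh⟩ := hf
          obtain ⟨hf1, hf2⟩ := hfix f hfh
          rw [Finset.mem_powersetCard]
          constructor
          · intro x hx
            rw [Finset.mem_filter] at hx
            rw [hE, Finset.mem_filter]
            refine ⟨hx.1, ?_⟩
            rw [← hfh, hPsi_val f hf1 hf2 x hx.1, if_neg (fun hc => hab' (hx.2.symm.trans hc))]
            exact hx.2
          · rw [hcountf f hfs1 hfh a' ha1' ha2', hk]
        · intro f hf g hg hfg
          rw [Finset.mem_filter] at hf hg
          obtain ⟨hff1, hff2⟩ := hfix f hf.2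
          obtain ⟨hgg1, hgg2⟩ := hfix g hg.2
          funext x
          by_cases hx : x ∈ Finset.Icc 3 n
          · have hfx : Psi f x = h x := congrFun hf.2 x
            have hgx : Psi g x = h x := congrFun hg.2 x
            rw [hPsi_val f hff1 hff2 x hx] at hfx
            rw [hPsi_val g hgg1 hgg2 x hx] at hgx
            by_cases hfa : f x = a'
            · have hxg : g x = a' := by
                have hm : x ∈ (Finset.Icc 3 n).filter fun y => f y = a' := by
                  rw [Finset.mem_filter]; exact ⟨hx, hfa⟩
                rw [hfg, Finset.mem_filter] at hm
                exact hm.2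
              rw [hfa, hxg]
            · by_cases hfb : f x = b'
              · have hhx : h x = a' := by rw [← hfx, if_pos hfb]
                by_cases hgb : g x = b'
                · rw [hfb, hgb]
                · exfalso
                  rw [if_neg hgb] at hgx
                  have hm : x ∈ (Finset.Icc 3 n).filter fun y => g y = a' := by
                    rw [Finset.mem_filter]
                    exact ⟨hx, hgx.trans hhx⟩
                  rw [← hfg, Finset.mem_filter] at hm
                  exact hfa hm.2
              · rw [if_neg hfb] at hfx
                by_cases hgb : g x = b'
                · exfalso
                  rw [if_pos hgb] at hgx
                  exact hfa (hfx.trans hgx.symm)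
                · rw [if_neg hgb] at hgx
                  exact hfx.trans hgx.symm
          · have e1 := hPsi_eq f x hx
            have e2 := hPsi_eq g x hx
            rw [← e1, ← e2, hf.2, hg.2]
        · intro T hT
          rw [Finset.mem_powersetCard] at hT
          obtain ⟨hTE, hTcard⟩ := hT
          have hT3 : T ⊆ Finset.Icc 3 n := fun x hx => hEsub (hTE hx)
          set fT : ℕ → ℕ := fun x => if x ∈ T then a' else if x ∈ E \ T then b' else h x with hfT
          have hfT_out : ∀ x, x ∉ Finset.Icc 3 n → fT x = h x := by
            intro x hx
            simp only [hfT]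
            rw [if_neg (fun hc => hx (hT3 hc)),
              if_neg (fun hc => hx (hEsub (Finset.mem_sdiff.mp hc).1))]
          have hfT1 : fT 1 = a := by rw [hfT_out 1 h13]; exact hh1
          have hfT2 : fT 2 = b := by rw [hfT_out 2 h23]; exact hh2
          have hhEa : ∀ x ∈ Finset.Icc 3 n, x ∉ E → h x ≠ a' ∧ h x ≠ b' := by
            intro x hx hxE
            have hna : h x ≠ a' := by
              intro hc
              exact hxE (by rw [hE, Finset.mem_filter]; exact ⟨hx, hc⟩)
            refine ⟨hna, ?_⟩
            intro hc
            have hval := hPf0' x hx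
            by_cases hfb : f0 x = b'
            · rw [if_pos hfb] at hval
              exact hna hval
            · rw [if_neg hfb] at hval
              exact hfb (hval.symm.trans hc)
          have hfta : (Finset.Icc 3 n).filter (fun x => fT x = a') = T := by
            ext x
            rw [Finset.mem_filter]
            constructor
            · rintro ⟨hx, hfx⟩
              by_contra hxT
              simp only [hfT] at hfx
              rw [if_neg hxT] at hfx
              by_cases hxE : x ∈ E \ T
              · rw [if_pos hxE] at hfx
                exact hab' hfx.symm
              · rw [if_neg hxE] at hfx
                have hxE' : x ∉ E := fun hc => hxE (Finset.mem_sdiff.mpr ⟨hc, hxT⟩)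
                exact (hhEa x hx hxE').1 hfx
            · intro hxT
              refine ⟨hT3 hxT, ?_⟩
              simp only [hfT]
              rw [if_pos hxT]
          have hftb : (Finset.Icc 3 n).filter (fun x => fT x = b') = E \ T := by
            ext x
            rw [Finset.mem_filter]
            constructor
            · rintro ⟨hx, hfx⟩
              simp only [hfT] at hfx
              by_cases hxT : x ∈ T
              · rw [if_pos hxT] at hfx
                exact absurd hfx hab'
              · rw [if_neg hxT] at hfx
                by_cases hxE : x ∈ E \ T
                · exact hxE
                · rw [if_neg hxE] at hfx
                  have hxE' : x ∉ E := fun hc => hxE (Finset.mem_sdiff.mpr ⟨hc, hxT⟩)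
                  exact absurd hfx (hhEa x hx hxE').2
            · intro hxE
              obtain ⟨hxEE, hxT⟩ := Finset.mem_sdiff.mp hxE
              refine ⟨hEsub hxEE, ?_⟩
              simp only [hfT]
              rw [if_neg hxT, if_pos (Finset.mem_sdiff.mpr ⟨hxEE, hxT⟩)]
          have hftv : ∀ v, v ≠ a' → v ≠ b' →
              (Finset.Icc 3 n).filter (fun x => fT x = v) =
                (Finset.Icc 3 n).filter (fun x => f0 x = v) := by
            intro v hva hvb
            apply Finset.filter_congr
            intro x hx
            simp only [hfT]
            by_cases hxT : x ∈ T
            · rw [if_pos hxT]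
              have hxE := hTE hxT
              rw [hEf0, Finset.mem_filter] at hxE
              constructor
              · intro hc; exact absurd hc.symm hva
              · intro hc
                rcases hxE.2 with hcc | hcc
                · exact absurd (hcc.symm.trans hc).symm hva
                · exact absurd (hcc.symm.trans hc).symm hvb
            · by_cases hxE : x ∈ E \ T
              · rw [if_neg hxT, if_pos hxE]
                have hxEE := (Finset.mem_sdiff.mp hxE).1
                rw [hEf0, Finset.mem_filter] at hxEE
                constructor
                · intro hc; exact absurd hc.symm hvb
                · intro hc
                  rcases hxEE.2 with hcc | hcc
                  · exact absurd (hcc.symm.trans hc).symm hva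
                  · exact absurd (hcc.symm.trans hc).symm hvb
              · rw [if_neg hxT, if_neg hxE]
                have hxE' : x ∉ E := fun hc => hxE (Finset.mem_sdiff.mpr ⟨hc, hxT⟩)
                have hval := hPf0' x hx
                have hfb : f0 x ≠ b' := by
                  intro hc
                  apply hxE'
                  rw [hEf0, Finset.mem_filter]
                  exact ⟨hx, Or.inr hc⟩
                rw [if_neg hfb] at hval
                rw [hval]
          have hcT : ∀ v, 1 ≤ v → v ≤ l →
              ((Finset.Icc 3 n).filter fun x => fT x = v).card = muu l lam a b v := by
            intro v h1v h2v
            rcases eq_or_ne v a' with rfl | hva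
            · rw [hfta, hTcard, hk]
            rcases eq_or_ne v b' with rfl | hvb
            · rw [hftb, Finset.card_sdiff_of_subset hTE, hEcard, hTcard]
              omega
            · rw [hftv v hva hvb, hcount0 v h1v h2v]
          have hospT : IsOSP n l lam fT := by
            refine ⟨?_, ?_, ?_⟩
            · intro x hx
              have hx3 : x ∉ Finset.Icc 3 n := by
                intro hc
                apply hx
                rw [Finset.mem_Icc] at hc ⊢
                omega
              rw [hfT_out x hx3, ← hPf0, hPsi_eq f0 x hx3]
              exact hosp0.1 x hx
            · intro x hx
              simp only [hfT]
              by_cases hxT : x ∈ T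
              · rw [if_pos hxT, Finset.mem_Icc]
                exact ⟨ha1', ha2'⟩
              by_cases hxE : x ∈ E \ T
              · rw [if_neg hxT, if_pos hxE, Finset.mem_Icc]
                exact ⟨hb1', hb2'⟩
              · rw [if_neg hxT, if_neg hxE]
                by_cases hx3 : x ∈ Finset.Icc 3 n
                · have hval := hPf0' x hx3
                  by_cases hfb : f0 x = b'
                  · rw [if_pos hfb] at hval
                    rw [hval, Finset.mem_Icc]
                    exact ⟨ha1', ha2'⟩
                  · rw [if_neg hfb] at hval
                    rw [hval]
                    exact hosp0.2.1 x hx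
                · rw [← hPf0, hPsi_eq f0 x hx3]
                  exact hosp0.2.1 x hx
            · intro i
              have h1v : 1 ≤ (i : ℕ) + 1 := by omega
              have h2v : (i : ℕ) + 1 ≤ l := by omega
              have hcc := (count_tail_iff (n := n) (lam := lam) hn hfT1 hfT2 hne0 hLa hLb).mpr
                (hcT ((i : ℕ) + 1) h1v h2v)
              rw [Lam_eq lam h1v h2v] at hcc
              have hi' : (⟨(i : ℕ) + 1 - 1, by omega⟩ : Fin l) = i := by ext; simp
              rw [hi'] at hcc
              exact hcc
          refine ⟨fT, ?_, hfta⟩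
          rw [Finset.mem_filter]
          constructor
          · rw [hs1, Finset.mem_filter]
            refine ⟨(hmem fT).mpr ⟨hospT, ?_⟩, ?_⟩
            · rw [hfT1, hfT2]; exact hne0
            · rw [hfT1, hfT2]; exact hf0lt
          · funext x
            by_cases hx : x ∈ Finset.Icc 3 n
            · rw [hPsi_val fT hfT1 hfT2 x hx]
              by_cases hxT : x ∈ T
              · have hfx : fT x = a' := by simp only [hfT]; rw [if_pos hxT]
                rw [if_neg (by rw [hfx]; exact hab'), hfx]
                have hxE := hTE hxT
                rw [hE, Finset.mem_filter] at hxE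
                exact hxE.2.symm
              · by_cases hxE : x ∈ E \ T
                · have hfx : fT x = b' := by
                    simp only [hfT]; rw [if_neg hxT, if_pos hxE]
                  rw [if_pos hfx]
                  have hxEE := (Finset.mem_sdiff.mp hxE).1
                  rw [hE, Finset.mem_filter] at hxEE
                  exact hxEE.2.symm
                · have hxE' : x ∉ E := fun hc => hxE (Finset.mem_sdiff.mpr ⟨hc, hxT⟩)
                  have hfx : fT x = h x := by
                    simp only [hfT]; rw [if_neg hxT, if_neg hxE]
                  rw [if_neg (by rw [hfx]; exact (hhEa x hx hxE').2), hfx]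
            · rw [hPsi_eq fT x hx, hfT_out x hx]
      rw [hbij, Finset.card_powersetCard, hEcard, hk]
      apply choose_even hodd1
      · exact Odd.add_odd hodd1 hodd2
      · exact Nat.le_add_right _ _

    have h4div : 4 ∣ movedCount n l lam := by
      rw [hmc]
      omega
    rw [PermChiral] at hchi
    omega
  refine ⟨key, ?_, ?_⟩
  · intro heven hchi
    have h1 : ¬ ((Finset.univ.filter fun i => Odd (lam i)).card = 0 ∨
        4 ≤ (Finset.univ.filter fun i => Odd (lam i)).card) := fun hc => key hc hchi
    push_neg at h1
    have hpar := sum_parity' lam Finset.univ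
    rw [hsum] at hpar
    rw [Nat.even_iff] at heven
    omega
  · intro hodd hchi
    have h1 : ¬ ((Finset.univ.filter fun i => Odd (lam i)).card = 0 ∨
        4 ≤ (Finset.univ.filter fun i => Odd (lam i)).card) := fun hc => key hc hchi
    push_neg at h1
    have hpar := sum_parity' lam Finset.univ
    rw [hsum] at hpar
    rw [Nat.odd_iff] at hodd
    omega

end ChiralPaper
end

section
/- For all integers n ≥ 0 and j ≥ 0, ∑_{i=0}^{n} binom(n,i)·B_{n+j−i} = ∑_{i=0}^{j} (−1)^i·binom(j,i)·B_{n+1+j−i}; that is, the left-hand side equals the j-th finite difference (Δ^j B)_{n+1} of the Bell number sequence evaluated at n+1. -/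
namespace ChiralPaper

section BellAux

open Finset

variable {α β : Type*} [DecidableEq α] [DecidableEq β]

instance finpartitionFinite (s : Finset α) : Finite (Finpartition s) :=
  Finite.of_injective
    (fun P => (⟨P.parts, Finset.mem_powerset.2 fun p hp =>
        Finset.mem_powerset.2 (P.le hp)⟩ : {t // t ∈ s.powerset.powerset}))
    fun P Q h => Finpartition.ext (congrArg Subtype.val h)

/-- Transfer a finpartition along an equality of index sets. -/
def copyEquiv {s t : Finset α} (h : s = t) : Finpartition s ≃ Finpartition t := by
  subst h; exact Equiv.refl _

theorem finpartition_heq {s t : Finset α} (h : s = t) {P : Finpartition s} {Q : Finpartition t}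
    (hp : P.parts = Q.parts) : HEq P Q := by
  subst h; exact heq_of_eq (Finpartition.ext hp)

/-- Push a finpartition forward along an embedding. -/
def mapEmb (f : β ↪ α) (t : Finset β) (P : Finpartition t) : Finpartition (t.map f) where
  parts := P.parts.map (Finset.mapEmbedding f).toEmbedding
  supIndep := by
    rw [Finset.supIndep_iff_pairwiseDisjoint]
    intro x hx y hy hxy
    simp only [coe_map, Set.mem_image, mem_coe, RelEmbedding.coe_toEmbedding,
      Finset.mapEmbedding_apply] at hx hy
    obtain ⟨p, hp, rfl⟩ := hx
    obtain ⟨q, hq, rfl⟩ := hy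
    simp only [Function.onFun, id_eq]
    rw [Finset.disjoint_map]
    exact P.disjoint hp hq (fun h => hxy (by rw [h]))
  sup_parts := by
    ext a
    simp only [Finset.mem_sup, mem_map, RelEmbedding.coe_toEmbedding,
      Finset.mapEmbedding_apply, id_eq]
    constructor
    · rintro ⟨x, ⟨p, hp, rfl⟩, hx⟩
      rw [mem_map] at hx
      obtain ⟨b, hb, rfl⟩ := hx
      exact ⟨b, by rw [← P.sup_parts, Finset.mem_sup]; exact ⟨p, hp, hb⟩, rfl⟩
    · rintro ⟨b, hb, rfl⟩
      rw [← P.sup_parts, Finset.mem_sup] at hb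
      obtain ⟨p, hp, hb⟩ := hb
      exact ⟨p.map f, ⟨p, hp, rfl⟩, mem_map_of_mem f hb⟩
  bot_notMem := by
    simp only [bot_eq_empty, mem_map, RelEmbedding.coe_toEmbedding, Finset.mapEmbedding_apply]
    rintro ⟨p, hp, hpe⟩
    rw [Finset.map_eq_empty] at hpe
    subst hpe
    exact P.bot_notMem hp


/-- Pull a finpartition of `t.map f` back to `t`. -/
noncomputable def mapEmbInv (f : β ↪ α) (t : Finset β) (Q : Finpartition (t.map f)) :
    Finpartition t := by
  classical
  exact
  { parts := Q.parts.image fun q => q.preimage f f.injective.injOn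
    supIndep := by
      rw [Finset.supIndep_iff_pairwiseDisjoint]
      intro x hx y hy hxy
      simp only [coe_image, Set.mem_image, mem_coe] at hx hy
      obtain ⟨p, hp, rfl⟩ := hx
      obtain ⟨q, hq, rfl⟩ := hy
      have hpq : p ≠ q := fun h => hxy (by rw [h])
      have hd := Q.disjoint hp hq hpq
      simp only [Function.onFun, id_eq]
      rw [Finset.disjoint_left]
      intro b hb1 hb2
      rw [Finset.mem_preimage] at hb1 hb2
      exact Finset.disjoint_left.1 hd hb1 hb2
    sup_parts := by
      ext b
      simp only [Finset.mem_sup, mem_image, id_eq]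
      constructor
      · rintro ⟨x, ⟨q, hq, rfl⟩, hb⟩
        rw [Finset.mem_preimage] at hb
        have : f b ∈ t.map f := by rw [← Q.sup_parts, Finset.mem_sup]; exact ⟨q, hq, hb⟩
        rwa [Finset.mem_map'] at this
      · intro hb
        have : f b ∈ t.map f := Finset.mem_map_of_mem f hb
        rw [← Q.sup_parts, Finset.mem_sup] at this
        obtain ⟨q, hq, hb'⟩ := this
        exact ⟨q.preimage f f.injective.injOn, ⟨q, hq, rfl⟩,
          Finset.mem_preimage.2 hb'⟩
    bot_notMem := by
      simp only [bot_eq_empty, mem_image]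
      rintro ⟨q, hq, hqe⟩
      obtain ⟨x, hx⟩ := Q.nonempty_of_mem_parts hq
      have hxt : x ∈ t.map f := Q.le hq hx
      rw [mem_map] at hxt
      obtain ⟨b, hb, rfl⟩ := hxt
      have : b ∈ q.preimage f f.injective.injOn := Finset.mem_preimage.2 hx
      rw [hqe] at this
      exact absurd this (Finset.notMem_empty b) }

theorem card_finpartition_map (f : β ↪ α) (t : Finset β) :
    Nat.card (Finpartition (t.map f)) = Nat.card (Finpartition t) := by
  classical
  refine Nat.card_congr (Equiv.mk (mapEmbInv f t) (mapEmb f t) ?_ ?_)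
  · intro Q
    apply Finpartition.ext
    show (((mapEmbInv f t Q).parts).map (Finset.mapEmbedding f).toEmbedding) = Q.parts
    have : (mapEmbInv f t Q).parts = Q.parts.image fun q => q.preimage f f.injective.injOn := by
      simp [mapEmbInv]
    rw [this, Finset.map_eq_image, Finset.image_image]
    rw [Finset.image_congr (g := id), Finset.image_id]
    intro q hq
    simp only [Function.comp_apply, RelEmbedding.coe_toEmbedding, Finset.mapEmbedding_apply, id_eq]
    rw [Finset.map_eq_image, Finset.image_preimage]
    rw [Finset.filter_eq_self]
    intro x hx
    have hxt : x ∈ t.map f := Q.le hq hx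
    rw [mem_map] at hxt
    obtain ⟨b, _, rfl⟩ := hxt
    exact ⟨b, rfl⟩
  · intro P
    apply Finpartition.ext
    show ((mapEmb f t P).parts).image (fun q => q.preimage f f.injective.injOn) = P.parts
    rw [show (mapEmb f t P).parts = P.parts.map (Finset.mapEmbedding f).toEmbedding from rfl]
    rw [Finset.map_eq_image, Finset.image_image]
    rw [Finset.image_congr (g := id), Finset.image_id]
    intro p _
    simp only [Function.comp_apply, RelEmbedding.coe_toEmbedding, Finset.mapEmbedding_apply, id_eq]
    ext b
    simp [Finset.mem_preimage]

theorem nat_card_finpartition (s : Finset α) : Nat.card (Finpartition s) = bell s.card := by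
  classical
  let f : Fin s.card ↪ α :=
    (s.equivFin.symm.toEmbedding).trans (Function.Embedding.subtype _)
  have hmap : (Finset.univ : Finset (Fin s.card)).map f = s := by
    apply Finset.eq_of_subset_of_card_le
    · intro x hx
      rw [Finset.mem_map] at hx
      obtain ⟨i, _, rfl⟩ := hx
      exact (s.equivFin.symm i).2
    · rw [Finset.card_map, Finset.card_univ, Fintype.card_fin]
  rw [bell, ← card_finpartition_map f Finset.univ, hmap]


theorem avoid_parts_of_mem {s : Finset α} (P : Finpartition s) {b : Finset α}
    (hb : b ∈ P.parts) : (P.avoid b).parts = P.parts.erase b := by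
  ext c
  rw [Finpartition.mem_avoid, Finset.mem_erase]
  constructor
  · rintro ⟨d, hd, hdb, rfl⟩
    have hne : d ≠ b := fun h => hdb (h ▸ le_refl b)
    have hdisj : Disjoint d b := P.disjoint hd hb hne
    rw [sdiff_eq_self_of_disjoint hdisj]
    exact ⟨hne, hd⟩
  · rintro ⟨hne, hc⟩
    have hdisj : Disjoint c b := P.disjoint hc hb hne
    refine ⟨c, hc, ?_, sdiff_eq_self_of_disjoint hdisj⟩
    intro hle
    exact (P.nonempty_of_mem_parts hc).ne_empty (Finset.bot_eq_empty ▸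
      hdisj.eq_bot_of_le hle)

def fwdAux (n : ℕ) (P : Finpartition (Finset.univ : Finset (Fin (n + 1)))) :
    Σ s : {s : Finset (Fin (n + 1)) // s ⊆ Finset.univ.erase 0},
      Finpartition (Finset.univ \ insert 0 s.1) :=
  ⟨⟨(P.part 0).erase 0, Finset.erase_subset_erase 0 (Finset.subset_univ _)⟩,
    (P.avoid (P.part 0)).copy
      (by rw [Finset.insert_erase (P.mem_part (Finset.mem_univ 0))])⟩

def bwdAux (n : ℕ)
    (x : Σ s : {s : Finset (Fin (n + 1)) // s ⊆ Finset.univ.erase 0},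
      Finpartition (Finset.univ \ insert 0 s.1)) :
    Finpartition (Finset.univ : Finset (Fin (n + 1))) :=
  x.2.extend (b := insert 0 x.1.1) (by simp [Finset.bot_eq_empty]) sdiff_disjoint
    (by rw [Finset.sup_eq_union, Finset.sdiff_union_of_subset (Finset.subset_univ _)])

theorem bwd_fwd (n : ℕ) (P : Finpartition (Finset.univ : Finset (Fin (n + 1)))) :
    bwdAux n (fwdAux n P) = P := by
  apply Finpartition.ext
  show insert (insert 0 ((P.part 0).erase 0)) ((P.avoid (P.part 0)).parts) = P.parts
  rw [Finset.insert_erase (P.mem_part (Finset.mem_univ 0)),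
    avoid_parts_of_mem P (P.part_mem.2 (Finset.mem_univ 0))]
  exact Finset.insert_erase (P.part_mem.2 (Finset.mem_univ 0))

theorem fwd_bwd (n : ℕ)
    (x : Σ s : {s : Finset (Fin (n + 1)) // s ⊆ Finset.univ.erase 0},
      Finpartition (Finset.univ \ insert 0 s.1)) :
    fwdAux n (bwdAux n x) = x := by
  obtain ⟨s, Q⟩ := x
  have h0s : (0 : Fin (n + 1)) ∉ s.1 := fun h => (Finset.mem_erase.1 (s.2 h)).1 rfl
  have hbE : insert 0 s.1 ∈ (bwdAux n ⟨s, Q⟩).parts := Finset.mem_insert_self _ _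
  have hpart : (bwdAux n ⟨s, Q⟩).part 0 = insert 0 s.1 :=
    (bwdAux n ⟨s, Q⟩).part_eq_of_mem hbE (Finset.mem_insert_self 0 s.1)
  have hfst : ((bwdAux n ⟨s, Q⟩).part 0).erase 0 = s.1 := by
    rw [hpart, Finset.erase_insert h0s]
  have hbQ : insert 0 s.1 ∉ Q.parts := fun h =>
    (Finset.mem_sdiff.1 (Q.le h (Finset.mem_insert_self 0 s.1))).2
      (Finset.mem_insert_self 0 s.1)
  have hparts : ((bwdAux n ⟨s, Q⟩).avoid ((bwdAux n ⟨s, Q⟩).part 0)).parts = Q.parts := by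
    rw [hpart, avoid_parts_of_mem _ hbE]
    show (insert (insert 0 s.1) Q.parts).erase (insert 0 s.1) = Q.parts
    rw [Finset.erase_insert hbQ]
  refine Sigma.ext (Subtype.ext hfst) ?_
  refine finpartition_heq ?_ hparts
  show Finset.univ \ insert 0 (((bwdAux n ⟨s, Q⟩).part 0).erase 0) = Finset.univ \ insert 0 s.1
  rw [hfst]

theorem bell_succ (n : ℕ) :
    bell (n + 1) = ∑ k ∈ Finset.range (n + 1), n.choose k * bell (n - k) := by
  classical
  set u : Finset (Fin (n + 1)) := Finset.univ.erase 0 with hu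
  -- the sigma equivalence
  have key : Finpartition (Finset.univ : Finset (Fin (n + 1))) ≃
      Σ s : {s : Finset (Fin (n + 1)) // s ⊆ u}, Finpartition (Finset.univ \ insert 0 s.1) :=
    Equiv.mk (fwdAux n) (bwdAux n) (bwd_fwd n) (fwd_bwd n)
  -- counting
  have hfin : ∀ s : {s : Finset (Fin (n + 1)) // s ⊆ u},
      Fintype (Finpartition (Finset.univ \ insert 0 s.1)) := fun s => Fintype.ofFinite _
  have card1 : bell (n + 1) =
      ∑ s : {s : Finset (Fin (n + 1)) // s ⊆ u}, Nat.card (Finpartition (Finset.univ \ insert 0 s.1)) := by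
    rw [bell, Nat.card_congr key]
    haveI := hfin
    rw [Nat.card_eq_fintype_card, Fintype.card_sigma]
    exact Finset.sum_congr rfl fun s _ => (Nat.card_eq_fintype_card (α := _)).symm
  have hcard : ∀ s : Finset (Fin (n + 1)), s ⊆ u →
      Nat.card (Finpartition (Finset.univ \ insert 0 s)) = bell (n - s.card) := by
    intro s hs
    rw [nat_card_finpartition]
    congr 1
    have h0s : (0 : Fin (n + 1)) ∉ s := fun h => (Finset.mem_erase.1 (hs h)).1 rfl
    rw [Finset.card_sdiff_of_subset (Finset.subset_univ _), Finset.card_insert_of_notMem h0s,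
      Finset.card_univ, Fintype.card_fin]
    omega
  rw [card1]
  rw [← Finset.sum_subtype u.powerset (fun s => Finset.mem_powerset)
    (fun s => Nat.card (Finpartition (Finset.univ \ insert 0 s)))]
  rw [Finset.sum_congr rfl (fun s hs => hcard s (Finset.mem_powerset.1 hs))]
  have hucard : u.card = n := by
    rw [hu, Finset.card_erase_of_mem (Finset.mem_univ 0), Finset.card_univ, Fintype.card_fin]
    omega
  calc ∑ s ∈ u.powerset, bell (n - s.card)
      = ∑ j ∈ Finset.range (u.card + 1), ∑ s ∈ Finset.powersetCard j u, bell (n - s.card) :=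
        Finset.sum_powerset u _
    _ = ∑ j ∈ Finset.range (n + 1), n.choose j * bell (n - j) := by
        rw [hucard]
        refine Finset.sum_congr rfl fun j _ => ?_
        rw [show (∑ s ∈ Finset.powersetCard j u, bell (n - s.card)) =
            ∑ s ∈ Finset.powersetCard j u, bell (n - j) from
          Finset.sum_congr rfl fun s hs => by rw [(Finset.mem_powersetCard.1 hs).2]]
        rw [Finset.sum_const, Finset.card_powersetCard, hucard, smul_eq_mul]


private noncomputable def L (n j : ℕ) : ℤ :=
  ∑ i ∈ Finset.range (n + 1), (n.choose i : ℤ) * bell (n + j - i)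

private noncomputable def R (n j : ℕ) : ℤ :=
  ∑ i ∈ Finset.range (j + 1), (-1) ^ i * (j.choose i : ℤ) * bell (n + 1 + j - i)

private theorem L_zero (n : ℕ) : L n 0 = (bell (n + 1) : ℤ) := by
  have := bell_succ n
  rw [L]
  simp only [Nat.add_zero]
  rw [show ((bell (n + 1) : ℤ)) = ((∑ k ∈ Finset.range (n + 1), n.choose k * bell (n - k) : ℕ) : ℤ)
    from by rw [← this]]
  push_cast
  rfl

private theorem R_zero (n : ℕ) : R n 0 = (bell (n + 1) : ℤ) := by
  rw [R]
  simp

private theorem L_rec (n j : ℕ) : L (n + 1) j = L n j + L n (j + 1) := by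
  conv_lhs => rw [L]
  rw [Finset.sum_range_succ']
  have h1 : ∀ i ∈ Finset.range (n + 1),
      ((n + 1).choose (i + 1) : ℤ) * bell (n + 1 + j - (i + 1)) =
        (n.choose i : ℤ) * bell (n + j - i) + (n.choose (i + 1) : ℤ) * bell (n + j - i) := by
    intro i _
    rw [Nat.choose_succ_succ']
    have : n + 1 + j - (i + 1) = n + j - i := by omega
    rw [this]
    push_cast
    ring
  rw [Finset.sum_congr rfl h1, Finset.sum_add_distrib]
  have h2 : (∑ i ∈ Finset.range (n + 1), (n.choose (i + 1) : ℤ) * bell (n + j - i)) =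
      ∑ i ∈ Finset.range n, (n.choose (i + 1) : ℤ) * bell (n + j - i) := by
    rw [Finset.sum_range_succ, Nat.choose_succ_self]
    simp
  rw [h2]
  have h3 : L n (j + 1) = (∑ i ∈ Finset.range n, (n.choose (i + 1) : ℤ) * bell (n + j - i))
      + (n.choose 0 : ℤ) * bell (n + (j + 1)) := by
    rw [L, Finset.sum_range_succ']
    congr 1
    refine Finset.sum_congr rfl fun i _ => ?_
    have : n + (j + 1) - (i + 1) = n + j - i := by omega
    rw [this]
  have h4 : n + 1 + j - 0 = n + (j + 1) := by omega
  rw [h4, h3, L]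
  simp only [Nat.choose_zero_right, Nat.cast_one, one_mul]
  ring

private theorem R_rec (n j : ℕ) : R n (j + 1) = R (n + 1) j - R n j := by
  conv_lhs => rw [R]
  rw [Finset.sum_range_succ']
  have h1 : ∀ i ∈ Finset.range (j + 1),
      ((-1 : ℤ)) ^ (i + 1) * ((j + 1).choose (i + 1) : ℤ) * bell (n + 1 + (j + 1) - (i + 1)) =
        -((-1) ^ i * (j.choose i : ℤ) * bell (n + 1 + j - i))
          + (-1) ^ (i + 1) * (j.choose (i + 1) : ℤ) * bell (n + 1 + j - i) := by
    intro i _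
    rw [Nat.choose_succ_succ']
    have : n + 1 + (j + 1) - (i + 1) = n + 1 + j - i := by omega
    rw [this]
    push_cast
    ring
  rw [Finset.sum_congr rfl h1, Finset.sum_add_distrib]
  have h2 : (∑ i ∈ Finset.range (j + 1),
      (-1 : ℤ) ^ (i + 1) * (j.choose (i + 1) : ℤ) * bell (n + 1 + j - i)) =
      ∑ i ∈ Finset.range j, (-1 : ℤ) ^ (i + 1) * (j.choose (i + 1) : ℤ) * bell (n + 1 + j - i) := by
    rw [Finset.sum_range_succ, Nat.choose_succ_self]
    simp
  rw [h2]
  have h3 : R (n + 1) j = (∑ i ∈ Finset.range j,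
      (-1 : ℤ) ^ (i + 1) * (j.choose (i + 1) : ℤ) * bell (n + 1 + j - i))
      + (j.choose 0 : ℤ) * bell (n + 1 + 1 + j) := by
    rw [R, Finset.sum_range_succ']
    congr 1
    · refine Finset.sum_congr rfl fun i _ => ?_
      have : n + 1 + 1 + j - (i + 1) = n + 1 + j - i := by omega
      rw [this]
    · simp
  have h4 : n + 1 + (j + 1) - 0 = n + 1 + 1 + j := by omega
  rw [h4, h3, R]
  simp only [Nat.choose_zero_right, Nat.cast_one, one_mul, pow_zero]
  rw [Finset.sum_neg_distrib]
  ring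

private theorem LR (j : ℕ) : ∀ n, L n j = R n j := by
  induction j with
  | zero => intro n; rw [L_zero, R_zero]
  | succ j ih =>
    intro n
    have h1 : L n (j + 1) = L (n + 1) j - L n j := by
      have := L_rec n j
      linarith
    rw [h1, ih, ih, ← R_rec]

end BellAux

theorem bell_binomial_sum (n j : ℕ) :
    ∑ i ∈ Finset.range (n + 1), (n.choose i : ℤ) * bell (n + j - i) =
      ∑ i ∈ Finset.range (j + 1),
        (-1) ^ i * (j.choose i : ℤ) * bell (n + 1 + j - i) := by
  exact LR j n

end ChiralPaper
end
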